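/- arXiv:2209.05897 — 3 statements merged into one kernel-verified Lean document; each statement's English description precedes it below -/
import Mathlib

section
/- Let a ∈ ℝ, 0 < p < ∞ and 0 < q, r ≤ ∞. Then HL^{a,r}_{p,q}(Ω) is complete with respect to the quasi-norm ‖·‖_{HL^{a,r}_{p,q}}: if (f_n) is a sequence in HL^{a,r}_{p,q}(Ω) such that ‖f_n − f_m‖_{HL^{a,r}_{p,q}} → 0 as n, m → ∞, then there exists f ∈ HL^{a,r}_{p,q}(Ω) with ‖f_n − f‖_{HL^{a,r}_{p,q}} → 0 as n → ∞. -/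
open MeasureTheory ENNReal Set Filter Topology

noncomputable section

variable {X : Type*}

/-- The decreasing rearrangement `f*` of `f` with respect to `μ` :
`f*(s) = inf {α ≥ 0 : μ({x : |f(x)| > α}) ≤ s}`. -/
def rearr [MeasurableSpace X] (μ : Measure X) (f : X → ℝ) (s : ℝ) : ℝ≥0∞ :=
  sInf {α : ℝ≥0∞ | μ {x | α < ENNReal.ofReal |f x|} ≤ ENNReal.ofReal s}

/-- The averaged (maximal) rearrangement `f**(s) = (1/s)∫_0^s f*(t) dt`. -/
def rearrStar [MeasurableSpace X] (μ : Measure X) (f : X → ℝ) (s : ℝ) : ℝ≥0∞ :=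
  (ENNReal.ofReal s)⁻¹ * ∫⁻ t in Set.Ioc (0 : ℝ) s, rearr μ f t

/-- The Lorentz functional built from a rearrangement-type function `R`:
`(∫_0^∞ (t^{1/p} R(t))^r dt/t)^{1/r}` for `r < ∞`, and `sup_{t>0} t^{1/p} R(t)`
for `r = ∞` (when `p = ∞`, `1/p` is interpreted as `0`, which for `R = f*`
recovers the essential supremum of `|f|`). -/
def lorentzNormOf (R : ℝ → ℝ≥0∞) (p r : ℝ≥0∞) : ℝ≥0∞ :=
  if r = ∞ then ⨆ t : {t : ℝ // 0 < t}, ENNReal.ofReal (t.1 ^ p.toReal⁻¹) * R t.1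
  else (∫⁻ t in Set.Ioi (0 : ℝ),
      (ENNReal.ofReal (t ^ p.toReal⁻¹) * R t) ^ r.toReal / ENNReal.ofReal t) ^ r.toReal⁻¹

/-- The Lorentz quasi-norm `‖f‖_{L^{p,r}}`. -/
def lorentzNorm [MeasurableSpace X] (μ : Measure X) (p r : ℝ≥0∞) (f : X → ℝ) : ℝ≥0∞ :=
  lorentzNormOf (rearr μ f) p r

/-- The Lorentz norm `‖f‖*_{L^{p,r}}`, with `f*` replaced by `f**`. -/
def lorentzNormStar [MeasurableSpace X] (μ : Measure X) (p r : ℝ≥0∞) (f : X → ℝ) : ℝ≥0∞ :=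
  lorentzNormOf (rearrStar μ f) p r

/-- The annuli `A_u`, `u ≥ -1`:  `A_{-1} = {x ∈ Ω : |x| < 1/2}` and, for `u ≥ 0`,
`A_u = {x ∈ Ω : 2^{u-1} ≤ |x| < 2^u}`. -/
def annulus [Norm X] (Ω : Set X) (u : ℤ) : Set X :=
  if u = -1 then {x ∈ Ω | ‖x‖ < 1 / 2}
  else {x ∈ Ω | (2 : ℝ) ^ (u - 1) ≤ ‖x‖ ∧ ‖x‖ < (2 : ℝ) ^ u}

/-- The Herz-type functional built from a functional `L` on the blocks:
`(Σ_{u ≥ -1} (2^{ua} L(f χ_{A_u}))^q)^{1/q}` for `q < ∞`, with the sup-modification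
for `q = ∞`. -/
def herzNormWith {E : Type*} [Norm X] [Zero E] (Ω : Set X) (a : ℝ) (q : ℝ≥0∞)
    (L : (X → E) → ℝ≥0∞) (f : X → E) : ℝ≥0∞ :=
  if q = ∞ then
    ⨆ u : {u : ℤ // -1 ≤ u},
      ENNReal.ofReal ((2 : ℝ) ^ ((u.1 : ℝ) * a)) * L ((annulus Ω u.1).indicator f)
  else (∑' u : {u : ℤ // -1 ≤ u},
      (ENNReal.ofReal ((2 : ℝ) ^ ((u.1 : ℝ) * a)) * L ((annulus Ω u.1).indicator f)) ^ q.toReal)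
      ^ q.toReal⁻¹

/-- The non-homogeneous Lorentz–Herz quasi-norm `‖f‖_{HL^{a,r}_{p,q}}`. -/
def herzNorm [MeasurableSpace X] [Norm X] (μ : Measure X) (Ω : Set X) (a : ℝ)
    (p q r : ℝ≥0∞) (f : X → ℝ) : ℝ≥0∞ :=
  herzNormWith Ω a q (lorentzNorm μ p r) f

/-- The non-homogeneous Lorentz–Herz norm `‖f‖*_{HL^{a,r}_{p,q}}`, built from the
Lorentz norms `‖·‖*_{L^{p,r}}`. -/
def herzNormStar [MeasurableSpace X] [Norm X] (μ : Measure X) (Ω : Set X) (a : ℝ)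
    (p q r : ℝ≥0∞) (f : X → ℝ) : ℝ≥0∞ :=
  herzNormWith Ω a q (lorentzNormStar μ p r) f

/-- The conjugate exponent: `1/p + 1/p' = 1`, with `1' = ∞` and `∞' = 1`. -/
def conjExp (p : ℝ≥0∞) : ℝ≥0∞ :=
  if p = 1 then ∞ else if p = ∞ then 1 else ENNReal.ofReal (p.toReal / (p.toReal - 1))

/-- The quantity `(Σ_{u≥-1} (2^{ua} μ(A_u ∩ E)^{1/p})^q)^{(of the summands)}`,
i.e. `Σ_{u≥-1} 2^{uaq} μ(A_u ∩ E)^{q/p}` for `q < ∞`, with the sup-modification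
for `q = ∞`. -/
def herzSetNorm [MeasurableSpace X] [Norm X] (μ : Measure X) (Ω : Set X) (a : ℝ)
    (p q : ℝ≥0∞) (E : Set X) : ℝ≥0∞ :=
  if q = ∞ then
    ⨆ u : {u : ℤ // -1 ≤ u},
      ENNReal.ofReal ((2 : ℝ) ^ ((u.1 : ℝ) * a)) * μ (annulus Ω u.1 ∩ E) ^ p.toReal⁻¹
  else ∑' u : {u : ℤ // -1 ≤ u},
      (ENNReal.ofReal ((2 : ℝ) ^ ((u.1 : ℝ) * a)) * μ (annulus Ω u.1 ∩ E) ^ p.toReal⁻¹) ^ q.toReal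

/-- The Peetre K-functional for the couple of quasi-normed function spaces
determined by the functionals `n₀`, `n₁`. -/
def Kfun [MeasurableSpace X] (n₀ n₁ : (X → ℝ) → ℝ≥0∞) (t : ℝ) (f : X → ℝ) : ℝ≥0∞ :=
  ⨅ (g : X → ℝ) (_ : Measurable g) (_ : Measurable (f - g)),
    n₀ g + ENNReal.ofReal t * n₁ (f - g)

/-- The real interpolation quasi-norm `‖f‖_{(X₀,X₁)_{θ,q}}`. -/
def interpNorm [MeasurableSpace X] (n₀ n₁ : (X → ℝ) → ℝ≥0∞) (θ : ℝ) (q : ℝ≥0∞)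
    (f : X → ℝ) : ℝ≥0∞ :=
  if q = ∞ then ⨆ t : {t : ℝ // 0 < t}, ENNReal.ofReal (t.1 ^ (-θ)) * Kfun n₀ n₁ t.1 f
  else (∫⁻ t in Set.Ioi (0 : ℝ),
      (ENNReal.ofReal (t ^ (-θ)) * Kfun n₀ n₁ t f) ^ q.toReal / ENNReal.ofReal t) ^ q.toReal⁻¹

/-- Membership in the sum `X₀ + X₁` of the couple determined by `n₀`, `n₁`. -/
def inSum [MeasurableSpace X] (n₀ n₁ : (X → ℝ) → ℝ≥0∞) (f : X → ℝ) : Prop :=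
  ∃ g : X → ℝ, Measurable g ∧ Measurable (f - g) ∧ n₀ g < ∞ ∧ n₁ (f - g) < ∞

end
abbrev Euc (N : ℕ) : Type := EuclideanSpace ℝ (Fin N)


noncomputable section AuxLorentzHerz
variable {X : Type*} [MeasurableSpace X] {μ : Measure X} {f g : X → ℝ} {s t : ℝ}

lemma rearr_le {α : ℝ≥0∞} (h : μ {x | α < ENNReal.ofReal |f x|} ≤ ENNReal.ofReal s) :
    rearr μ f s ≤ α := sInf_le h

lemma rearr_upward {α β : ℝ≥0∞} (hab : α ≤ β)
    (h : μ {x | α < ENNReal.ofReal |f x|} ≤ ENNReal.ofReal s) :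
    μ {x | β < ENNReal.ofReal |f x|} ≤ ENNReal.ofReal s :=
  le_trans (measure_mono (fun x hx => lt_of_le_of_lt hab hx)) h

lemma rearr_spec (μ : Measure X) (f : X → ℝ) (s : ℝ) :
    μ {x | rearr μ f s < ENNReal.ofReal |f x|} ≤ ENNReal.ofReal s := by
  set I := rearr μ f s with hI
  rcases eq_or_ne I ∞ with htop | htop
  · have : {x | I < ENNReal.ofReal |f x|} = ∅ := by
      ext x; simp [htop]
    simp [this]
  · -- every β > I is in the defining set
    have hmem : ∀ β, I < β → μ {x | β < ENNReal.ofReal |f x|} ≤ ENNReal.ofReal s := by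
      intro β hβ
      obtain ⟨γ, hγS, hγβ⟩ := sInf_lt_iff.mp (hI ▸ hβ)
      exact rearr_upward hγβ.le hγS
    have hcover : {x | I < ENNReal.ofReal |f x|}
        ⊆ ⋃ n : ℕ, {x | I + ((n:ℝ≥0∞) + 1)⁻¹ < ENNReal.ofReal |f x|} := by
      intro x hx
      have htend : Tendsto (fun n : ℕ => I + ((n:ℝ≥0∞) + 1)⁻¹) atTop (𝓝 I) := by
        have h0 : Tendsto (fun n : ℕ => ((n:ℝ≥0∞) + 1)⁻¹) atTop (𝓝 0) := by
          have := ENNReal.tendsto_inv_nat_nhds_zero.comp (tendsto_add_atTop_nat 1)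
          refine this.congr fun n => by simp
        simpa using (tendsto_const_nhds.add h0)
      have := htend.eventually_lt_const hx
      obtain ⟨n, hn⟩ := this.exists
      exact mem_iUnion.2 ⟨n, by simpa using hn⟩
    have hmono : Monotone (fun n : ℕ => {x | I + ((n:ℝ≥0∞) + 1)⁻¹ < ENNReal.ofReal |f x|}) := by
      intro m n hmn x hx
      simp only [Set.mem_setOf_eq] at hx ⊢
      refine lt_of_le_of_lt (add_le_add le_rfl ?_) hx
      exact ENNReal.inv_le_inv.2 (by exact_mod_cast add_le_add (Nat.cast_le.2 hmn) le_rfl)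
    calc μ {x | I < ENNReal.ofReal |f x|}
        ≤ μ (⋃ n : ℕ, {x | I + ((n:ℝ≥0∞) + 1)⁻¹ < ENNReal.ofReal |f x|}) := by
          exact measure_mono hcover
      _ = ⨆ n : ℕ, μ {x | I + ((n:ℝ≥0∞) + 1)⁻¹ < ENNReal.ofReal |f x|} := hmono.measure_iUnion
      _ ≤ ENNReal.ofReal s := by
          refine iSup_le fun n => hmem _ ?_
          exact ENNReal.lt_add_right htop (by simp [Nat.cast_add_one_ne_zero])

lemma rearr_antitone : Antitone (rearr μ f) := by
  intro s t hst
  exact sInf_le_sInf fun α hα => le_trans hα (ENNReal.ofReal_le_ofReal hst)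

lemma rearr_mono_ae (h : ∀ᵐ x ∂μ, |f x| ≤ |g x|) : ∀ s, rearr μ f s ≤ rearr μ g s := by
  intro s
  refine sInf_le_sInf fun α hα => ?_
  refine le_trans (measure_mono_ae ?_) hα
  filter_upwards [h] with x hx hx2
  exact lt_of_lt_of_le hx2 (ENNReal.ofReal_le_ofReal hx)


lemma rearr_lsc {h : ℕ → X → ℝ} {H : X → ℝ}
    (hae : ∀ᵐ x ∂μ, Tendsto (fun k => h k x) atTop (𝓝 (H x))) (s : ℝ) :
    rearr μ H s ≤ atTop.liminf (fun k => rearr μ (h k) s) := by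
  set L := atTop.liminf (fun k => rearr μ (h k) s) with hL
  by_contra hc
  push_neg at hc
  obtain ⟨β, hLβ, hβ⟩ := exists_between hc
  -- key: μ {x | β < |H x|} ≤ ofReal s, giving rearr ≤ β, contradiction
  have key : μ {x | β < ENNReal.ofReal |H x|} ≤ ENNReal.ofReal s := by
    have hfreq : ∃ᶠ k in atTop, rearr μ (h k) s < β := frequently_lt_of_liminf_lt (by isBoundedDefault) hLβ
    set B : ℕ → Set X := fun n => ⋂ k ∈ Set.Ici n, {x | β < ENNReal.ofReal |h k x|} with hB
    have hBle : ∀ n, μ (B n) ≤ ENNReal.ofReal s := by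
      intro n
      obtain ⟨k, hkβ, hnk⟩ := (hfreq.and_eventually (eventually_ge_atTop n)).exists
      have h1 : B n ⊆ {x | β < ENNReal.ofReal |h k x|} := iInter₂_subset k hnk
      have h2 : {x | β < ENNReal.ofReal |h k x|}
          ⊆ {x | rearr μ (h k) s < ENNReal.ofReal |h k x|} := fun x hx => lt_trans hkβ hx
      exact le_trans (measure_mono (h1.trans h2)) (rearr_spec μ (h k) s)
    have hBmono : Monotone B := by
      intro m n hmn
      exact biInter_subset_biInter_left (Set.Ici_subset_Ici.2 hmn)
    have hsub : {x | β < ENNReal.ofReal |H x|} ≤ᵐ[μ] ⋃ n, B n := by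
      filter_upwards [hae] with x hx hxβ
      have : Tendsto (fun k => ENNReal.ofReal |h k x|) atTop (𝓝 (ENNReal.ofReal |H x|)) :=
        (ENNReal.continuous_ofReal.tendsto _).comp ((continuous_abs.tendsto _).comp hx)
      have hev : ∀ᶠ k in atTop, β < ENNReal.ofReal |h k x| := this.eventually_const_lt hxβ
      obtain ⟨n, hn⟩ := hev.exists_forall_of_atTop
      exact mem_iUnion.2 ⟨n, mem_iInter₂.2 fun k hk => hn k hk⟩
    calc μ {x | β < ENNReal.ofReal |H x|} ≤ μ (⋃ n, B n) := measure_mono_ae hsub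
      _ = ⨆ n, μ (B n) := hBmono.measure_iUnion
      _ ≤ ENNReal.ofReal s := iSup_le hBle
  exact absurd (rearr_le key) (not_le.2 hβ)

lemma rearr_add_le (μ : Measure X) (f g : X → ℝ) {s t : ℝ} (hs : 0 ≤ s) (ht : 0 ≤ t) :
    rearr μ (f + g) (s + t) ≤ rearr μ f s + rearr μ g t := by
  refine rearr_le ?_
  have hsub : {x | rearr μ f s + rearr μ g t < ENNReal.ofReal |(f + g) x|}
      ⊆ {x | rearr μ f s < ENNReal.ofReal |f x|} ∪ {x | rearr μ g t < ENNReal.ofReal |g x|} := by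
    intro x hx
    by_contra hcon
    simp only [Set.mem_union, Set.mem_setOf_eq, not_or, not_lt] at hcon
    have : ENNReal.ofReal |(f + g) x| ≤ rearr μ f s + rearr μ g t := by
      calc ENNReal.ofReal |(f + g) x| ≤ ENNReal.ofReal (|f x| + |g x|) :=
            ENNReal.ofReal_le_ofReal (abs_add_le _ _)
        _ = ENNReal.ofReal |f x| + ENNReal.ofReal |g x| := ENNReal.ofReal_add (abs_nonneg _) (abs_nonneg _)
        _ ≤ _ := add_le_add hcon.1 hcon.2
    exact absurd hx (not_lt.2 this)
  calc μ _ ≤ μ _ := measure_mono hsub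
    _ ≤ μ {x | rearr μ f s < ENNReal.ofReal |f x|} + μ {x | rearr μ g t < ENNReal.ofReal |g x|} :=
        measure_union_le _ _
    _ ≤ ENNReal.ofReal s + ENNReal.ofReal t := add_le_add (rearr_spec μ f s) (rearr_spec μ g t)
    _ = ENNReal.ofReal (s + t) := (ENNReal.ofReal_add hs ht).symm

lemma ENN.const_mul_liminf_le {c : ℝ≥0∞} (hc : c ≠ ∞) (x : ℕ → ℝ≥0∞) :
    c * atTop.liminf x ≤ atTop.liminf (fun k => c * x k) := by
  have : (fun y => c * y) (atTop.liminf x) = atTop.liminf ((fun y => c * y) ∘ x) :=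
    Monotone.map_liminf_of_continuousAt (fun a b hab => mul_le_mul_right hab c) x
      ((ENNReal.continuous_const_mul hc).continuousAt)
  exact le_of_eq this

lemma ENN.rpow_liminf_le {ρ : ℝ} (hρ : 0 ≤ ρ) (x : ℕ → ℝ≥0∞) :
    (atTop.liminf x) ^ ρ ≤ atTop.liminf (fun k => x k ^ ρ) := by
  have : (fun y : ℝ≥0∞ => y ^ ρ) (atTop.liminf x) = atTop.liminf ((fun y : ℝ≥0∞ => y ^ ρ) ∘ x) :=
    Monotone.map_liminf_of_continuousAt (fun a b hab => ENNReal.rpow_le_rpow hab hρ) x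
      (ENNReal.continuous_rpow_const.continuousAt)
  exact le_of_eq this

lemma ENN.mul_const_liminf_le {c : ℝ≥0∞} (hc : c ≠ ∞) (x : ℕ → ℝ≥0∞) :
    atTop.liminf x * c ≤ atTop.liminf (fun k => x k * c) := by
  simpa [mul_comm] using ENN.const_mul_liminf_le hc x

lemma ENN.tsum_liminf_le {ι : Type*} [Countable ι] [MeasurableSpace ι]
    [MeasurableSingletonClass ι] (x : ℕ → ι → ℝ≥0∞) :
    (∑' u, atTop.liminf (fun k => x k u)) ≤ atTop.liminf (fun k => ∑' u, x k u) := by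
  have h1 : ∀ k, (∑' u, x k u) = ∫⁻ u, x k u ∂(Measure.count) := fun k =>
    (lintegral_count _).symm
  have h2 : (∑' u, atTop.liminf (fun k => x k u))
      = ∫⁻ u, atTop.liminf (fun k => x k u) ∂(Measure.count) := (lintegral_count _).symm
  rw [h2]
  simp_rw [h1]
  exact lintegral_liminf_le (fun k => measurable_of_countable _)

lemma lorentzNormOf_fatou {p r : ℝ≥0∞} {R : ℝ → ℝ≥0∞} {Rk : ℕ → ℝ → ℝ≥0∞}
    (hmeas : ∀ k, Measurable (Rk k))
    (hle : ∀ t, 0 < t → R t ≤ atTop.liminf (fun k => Rk k t)) :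
    lorentzNormOf R p r ≤ atTop.liminf (fun k => lorentzNormOf (Rk k) p r) := by
  rcases eq_or_ne r ∞ with hr | hr
  · simp only [lorentzNormOf, hr, if_true]
    refine iSup_le fun t => ?_
    have h1 : ENNReal.ofReal (t.1 ^ p.toReal⁻¹) * R t.1
        ≤ atTop.liminf (fun k => ENNReal.ofReal (t.1 ^ p.toReal⁻¹) * Rk k t.1) :=
      le_trans (mul_le_mul_right (hle t.1 t.2) _) (ENN.const_mul_liminf_le ENNReal.ofReal_ne_top _)
    refine le_trans h1 (liminf_le_liminf ?_)
    exact Eventually.of_forall fun k =>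
      le_iSup (fun t : {t : ℝ // 0 < t} => ENNReal.ofReal (t.1 ^ p.toReal⁻¹) * Rk k t.1) t
  · simp only [lorentzNormOf, hr, if_false]
    set ρ := r.toReal with hρdef
    have hρ : 0 ≤ ρ := ENNReal.toReal_nonneg
    set G : ℕ → ℝ → ℝ≥0∞ := fun k t =>
      (ENNReal.ofReal (t ^ p.toReal⁻¹) * Rk k t) ^ ρ / ENNReal.ofReal t with hG
    have hGmeas : ∀ k, Measurable (G k) := by
      intro k
      apply Measurable.div
      · exact (((Real.continuous_rpow_const (by positivity)).measurable.ennreal_ofReal.mul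
          (hmeas k)).pow_const ρ)
      · exact measurable_id.ennreal_ofReal
    have hpt : ∀ t ∈ Set.Ioi (0:ℝ),
        (ENNReal.ofReal (t ^ p.toReal⁻¹) * R t) ^ ρ / ENNReal.ofReal t
          ≤ atTop.liminf (fun k => G k t) := by
      intro t ht
      have h1 : ENNReal.ofReal (t ^ p.toReal⁻¹) * R t
          ≤ atTop.liminf (fun k => ENNReal.ofReal (t ^ p.toReal⁻¹) * Rk k t) :=
        le_trans (mul_le_mul_right (hle t ht) _) (ENN.const_mul_liminf_le ENNReal.ofReal_ne_top _)
      have h2 : (ENNReal.ofReal (t ^ p.toReal⁻¹) * R t) ^ ρ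
          ≤ atTop.liminf (fun k => (ENNReal.ofReal (t ^ p.toReal⁻¹) * Rk k t) ^ ρ) :=
        le_trans (ENNReal.rpow_le_rpow h1 hρ) (ENN.rpow_liminf_le hρ _)
      have hinv : (ENNReal.ofReal t)⁻¹ ≠ ∞ := by
        simp [ENNReal.ofReal_pos.2 ht, (ENNReal.ofReal_pos.2 (mem_Ioi.mp ht)).ne']
      calc (ENNReal.ofReal (t ^ p.toReal⁻¹) * R t) ^ ρ / ENNReal.ofReal t
          ≤ atTop.liminf (fun k => (ENNReal.ofReal (t ^ p.toReal⁻¹) * Rk k t) ^ ρ)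
            * (ENNReal.ofReal t)⁻¹ := by
            rw [div_eq_mul_inv]; exact mul_le_mul_left h2 _
        _ ≤ atTop.liminf (fun k => (ENNReal.ofReal (t ^ p.toReal⁻¹) * Rk k t) ^ ρ
            * (ENNReal.ofReal t)⁻¹) := ENN.mul_const_liminf_le hinv _
        _ = atTop.liminf (fun k => G k t) := by simp [hG, div_eq_mul_inv]
    have hint : (∫⁻ t in Set.Ioi (0:ℝ),
        (ENNReal.ofReal (t ^ p.toReal⁻¹) * R t) ^ ρ / ENNReal.ofReal t)
          ≤ atTop.liminf (fun k => ∫⁻ t in Set.Ioi (0:ℝ), G k t) := by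
      refine le_trans (setLIntegral_mono_ae ?_ ?_) (lintegral_liminf_le hGmeas)
      · exact (Measurable.liminf fun k => hGmeas k).aemeasurable
      · exact Eventually.of_forall hpt
    refine le_trans (ENNReal.rpow_le_rpow hint (by positivity)) ?_
    refine le_trans (ENN.rpow_liminf_le (by positivity) _) ?_
    exact le_of_eq rfl

lemma rearr_ge_of_meas {lam : ℝ} {δ : ℝ} {h : X → ℝ}
    (hm : ENNReal.ofReal δ < μ {x | ENNReal.ofReal lam < ENNReal.ofReal |h x|})
    {t : ℝ} (ht : t ≤ δ) : ENNReal.ofReal lam ≤ rearr μ h t := by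
  by_contra hc
  push_neg at hc
  have : μ {x | ENNReal.ofReal lam < ENNReal.ofReal |h x|} ≤ ENNReal.ofReal δ := by
    refine le_trans (measure_mono fun x hx => lt_trans hc hx) ?_
    exact le_trans (rearr_spec μ h t) (ENNReal.ofReal_le_ofReal ht)
  exact absurd hm (not_lt.2 this)

lemma exists_eps_lorentz (μ : Measure X) (p r : ℝ≥0∞) (hp0 : p ≠ 0) (hp : p ≠ ∞)
    (hr0 : r ≠ 0) {lam δ : ℝ} (hlam : 0 < lam) (hδ : 0 < δ) :
    ∃ ε : ℝ≥0∞, 0 < ε ∧ ∀ h : X → ℝ, lorentzNorm μ p r h < ε →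
      μ {x | ENNReal.ofReal lam < ENNReal.ofReal |h x|} ≤ ENNReal.ofReal δ := by
  have hppos : (0:ℝ) < p.toReal⁻¹ := by
    have := ENNReal.toReal_pos hp0 hp
    positivity
  rcases eq_or_ne r ∞ with hr | hr
  · refine ⟨ENNReal.ofReal (δ ^ p.toReal⁻¹) * ENNReal.ofReal lam, ?_, ?_⟩
    · exact ENNReal.mul_pos (by simp [ENNReal.ofReal_pos.2 (Real.rpow_pos_of_pos hδ _), ne_of_gt])
        (by simp [ENNReal.ofReal_pos.2 hlam, ne_of_gt])
    · intro h hlt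
      by_contra hc
      push_neg at hc
      have hterm : ENNReal.ofReal (δ ^ p.toReal⁻¹) * ENNReal.ofReal lam ≤ lorentzNorm μ p r h := by
        have h1 : ENNReal.ofReal lam ≤ rearr μ h δ := rearr_ge_of_meas hc le_rfl
        calc ENNReal.ofReal (δ ^ p.toReal⁻¹) * ENNReal.ofReal lam
            ≤ ENNReal.ofReal (δ ^ p.toReal⁻¹) * rearr μ h δ := mul_le_mul_right h1 _
          _ ≤ _ := by
              rw [lorentzNorm, lorentzNormOf, if_pos hr]
              exact le_iSup (fun t : {t : ℝ // 0 < t} =>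
                ENNReal.ofReal (t.1 ^ p.toReal⁻¹) * rearr μ h t.1) ⟨δ, hδ⟩
      exact absurd hlt (not_lt.2 hterm)
  · set ρ := r.toReal with hρ
    have hρpos : 0 < ρ := ENNReal.toReal_pos hr0 hr
    set C : ℝ≥0∞ := ∫⁻ t in Set.Ioc (0:ℝ) δ,
      (ENNReal.ofReal (t ^ p.toReal⁻¹)) ^ ρ / ENNReal.ofReal t with hC
    have hmeasC : Measurable fun t : ℝ =>
        (ENNReal.ofReal (t ^ p.toReal⁻¹)) ^ ρ / ENNReal.ofReal t :=
      (((Real.continuous_rpow_const hppos.le).measurable.ennreal_ofReal).pow_const ρ).div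
        measurable_id.ennreal_ofReal
    have hCpos : 0 < C := by
      rw [hC, lintegral_pos_iff_support hmeasC]
      have hsupp : Set.Ioc (0:ℝ) δ ⊆ Function.support fun t =>
          (ENNReal.ofReal (t ^ p.toReal⁻¹)) ^ ρ / ENNReal.ofReal t := by
        intro t ht
        have h1 : (0:ℝ≥0∞) < (ENNReal.ofReal (t ^ p.toReal⁻¹)) ^ ρ :=
          ENNReal.rpow_pos_of_nonneg (ENNReal.ofReal_pos.2 (Real.rpow_pos_of_pos ht.1 _)) hρpos.le
        have h2 : (0:ℝ≥0∞) < (ENNReal.ofReal (t ^ p.toReal⁻¹)) ^ ρ / ENNReal.ofReal t :=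
          ENNReal.div_pos h1.ne' ENNReal.ofReal_ne_top
        exact h2.ne'
      calc (0:ℝ≥0∞) < ENNReal.ofReal δ := ENNReal.ofReal_pos.2 hδ
        _ = (volume.restrict (Set.Ioc (0:ℝ) δ)) (Set.Ioc (0:ℝ) δ) := by
            rw [Measure.restrict_apply_self]; simp [hδ.le]
        _ ≤ _ := measure_mono hsupp
    refine ⟨((ENNReal.ofReal lam) ^ ρ * C) ^ ρ⁻¹, ?_, ?_⟩
    · exact ENNReal.rpow_pos_of_nonneg (ENNReal.mul_pos
        (ENNReal.rpow_pos_of_nonneg (ENNReal.ofReal_pos.2 hlam) hρpos.le).ne'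
        hCpos.ne') (by positivity)
    · intro h hlt
      by_contra hc
      push_neg at hc
      have hge : ∀ t ∈ Set.Ioc (0:ℝ) δ, ENNReal.ofReal lam ≤ rearr μ h t := fun t ht =>
        rearr_ge_of_meas hc ht.2
      have hbound : (ENNReal.ofReal lam) ^ ρ * C
          ≤ ∫⁻ t in Set.Ioi (0:ℝ),
            (ENNReal.ofReal (t ^ p.toReal⁻¹) * rearr μ h t) ^ ρ / ENNReal.ofReal t := by
        rw [hC, ← lintegral_const_mul _ hmeasC]
        refine le_trans (setLIntegral_mono_ae ?_ ?_) (lintegral_mono_set Set.Ioc_subset_Ioi_self)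
        · exact ((((Real.continuous_rpow_const hppos.le).measurable.ennreal_ofReal.mul
            rearr_antitone.measurable).pow_const ρ).div measurable_id.ennreal_ofReal).aemeasurable
        · refine Eventually.of_forall fun t ht => ?_
          have key : (ENNReal.ofReal (t ^ p.toReal⁻¹) * ENNReal.ofReal lam) ^ ρ / ENNReal.ofReal t
              ≤ (ENNReal.ofReal (t ^ p.toReal⁻¹) * rearr μ h t) ^ ρ / ENNReal.ofReal t := by
            apply ENNReal.div_le_div_right
            exact ENNReal.rpow_le_rpow (mul_le_mul_right (hge t ht) _) hρpos.le
          refine le_trans (le_of_eq ?_) key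
          rw [ENNReal.mul_rpow_of_nonneg _ _ hρpos.le, div_eq_mul_inv, div_eq_mul_inv]
          ring
      have : ((ENNReal.ofReal lam) ^ ρ * C) ^ ρ⁻¹ ≤ lorentzNorm μ p r h := by
        rw [lorentzNorm, lorentzNormOf, if_neg hr]
        exact ENNReal.rpow_le_rpow hbound (by positivity)
      exact absurd hlt (not_lt.2 this)

lemma annulus_subset [Norm X] (Ω : Set X) (u : ℤ) : annulus Ω u ⊆ Ω := by
  unfold annulus
  split <;> exact fun x hx => hx.1

lemma mem_annulus_of [SeminormedAddCommGroup X] {Ω : Set X} {x : X} (hx : x ∈ Ω) :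
    ∃ u : ℤ, -1 ≤ u ∧ x ∈ annulus Ω u := by
  rcases lt_or_ge ‖x‖ (1/2) with h | h
  · refine ⟨-1, le_rfl, ?_⟩
    simp only [annulus, if_pos rfl, Set.mem_setOf_eq]
    exact ⟨hx, h⟩
  · have hnorm : (0:ℝ) < ‖x‖ := lt_of_lt_of_le (by norm_num) h
    obtain ⟨n, hn1, hn2⟩ := exists_mem_Ico_zpow hnorm (by norm_num : (1:ℝ) < 2)
    refine ⟨n + 1, ?_, ?_⟩
    · -- 2^n ≤ ‖x‖ and 1/2 ≤ ‖x‖ < 2^(n+1) gives n+1 ≥ 0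
      by_contra hc
      push_neg at hc
      have hn0 : n + 1 ≤ -1 := by omega
      have : (2:ℝ) ^ (n+1) ≤ 2 ^ (-1 : ℤ) := zpow_le_zpow_right₀ (by norm_num) hn0
      have h2 : ‖x‖ < (2:ℝ)^(-1:ℤ) := lt_of_lt_of_le hn2 this
      rw [zpow_neg_one] at h2
      norm_num at h2
      linarith
    · have hne : ¬ (n + 1 = -1) := by
        intro hcon
        have : n = -2 := by omega
        subst this
        norm_num at hn2
        linarith
      simp only [annulus, if_neg hne]
      exact ⟨hx, by simpa using hn1, hn2⟩

lemma Omega_subset_iUnion [SeminormedAddCommGroup X] (Ω : Set X) :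
    Ω ⊆ ⋃ u : {u : ℤ // -1 ≤ u}, annulus Ω u.1 := by
  intro x hx
  obtain ⟨u, hu, hxu⟩ := mem_annulus_of hx
  exact mem_iUnion.2 ⟨⟨u, hu⟩, hxu⟩

lemma term_le_herzNormWith {E : Type*} [Norm X] [Zero E] (Ω : Set X) (a : ℝ) {q : ℝ≥0∞}
    (hq0 : q ≠ 0) (L : (X → E) → ℝ≥0∞) (f : X → E) {u : ℤ} (hu : -1 ≤ u) :
    ENNReal.ofReal ((2 : ℝ) ^ ((u : ℝ) * a)) * L ((annulus Ω u).indicator f)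
      ≤ herzNormWith Ω a q L f := by
  rcases eq_or_ne q ∞ with hq | hq
  · rw [herzNormWith, if_pos hq]
    exact le_iSup (fun v : {v : ℤ // -1 ≤ v} =>
      ENNReal.ofReal ((2 : ℝ) ^ ((v.1 : ℝ) * a)) * L ((annulus Ω v.1).indicator f)) ⟨u, hu⟩
  · rw [herzNormWith, if_neg hq]
    have hρ : q.toReal ≠ 0 := (ENNReal.toReal_pos hq0 hq).ne'
    set x := ENNReal.ofReal ((2 : ℝ) ^ ((u : ℝ) * a)) * L ((annulus Ω u).indicator f)
    have h1 : x ^ q.toReal ≤ ∑' v : {v : ℤ // -1 ≤ v},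
        (ENNReal.ofReal ((2 : ℝ) ^ ((v.1 : ℝ) * a)) * L ((annulus Ω v.1).indicator f)) ^ q.toReal :=
      ENNReal.le_tsum (f := fun v : {v : ℤ // -1 ≤ v} =>
        (ENNReal.ofReal ((2 : ℝ) ^ ((v.1 : ℝ) * a)) * L ((annulus Ω v.1).indicator f)) ^ q.toReal)
        ⟨u, hu⟩
    calc x = (x ^ q.toReal) ^ q.toReal⁻¹ := by
          rw [← ENNReal.rpow_mul, mul_inv_cancel₀ hρ, ENNReal.rpow_one]
      _ ≤ _ := ENNReal.rpow_le_rpow h1 (by positivity)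

lemma lorentz_ind_fatou [Norm X] {μ : Measure X} {Ω : Set X} (p r : ℝ≥0∞) {h : ℕ → X → ℝ} {H : X → ℝ}
    (hae : ∀ᵐ x ∂μ, x ∈ Ω → Tendsto (fun k => h k x) atTop (𝓝 (H x))) (u : ℤ) :
    lorentzNorm μ p r ((annulus Ω u).indicator H)
      ≤ atTop.liminf (fun k => lorentzNorm μ p r ((annulus Ω u).indicator (h k))) := by
  have hsub : annulus Ω u ⊆ Ω := by unfold annulus; split <;> exact fun x hx => hx.1
  have hae' : ∀ᵐ x ∂μ, Tendsto (fun k => (annulus Ω u).indicator (h k) x) atTop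
      (𝓝 ((annulus Ω u).indicator H x)) := by
    filter_upwards [hae] with x hx
    by_cases hxA : x ∈ annulus Ω u
    · simpa [Set.indicator_of_mem hxA] using hx (hsub hxA)
    · simpa [Set.indicator_of_notMem hxA] using tendsto_const_nhds
  exact lorentzNormOf_fatou (fun k => rearr_antitone.measurable)
    (fun t _ => rearr_lsc hae' t)

lemma herzNorm_fatou [Norm X] {μ : Measure X} {Ω : Set X} (a : ℝ) (p q r : ℝ≥0∞)
    {h : ℕ → X → ℝ} {H : X → ℝ}
    (hae : ∀ᵐ x ∂μ, x ∈ Ω → Tendsto (fun k => h k x) atTop (𝓝 (H x))) :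
    herzNorm μ Ω a p q r H ≤ atTop.liminf (fun k => herzNorm μ Ω a p q r (h k)) := by
  have hterm : ∀ u : {u : ℤ // -1 ≤ u},
      ENNReal.ofReal ((2 : ℝ) ^ ((u.1 : ℝ) * a)) * lorentzNorm μ p r ((annulus Ω u.1).indicator H)
        ≤ atTop.liminf (fun k => ENNReal.ofReal ((2 : ℝ) ^ ((u.1 : ℝ) * a)) *
            lorentzNorm μ p r ((annulus Ω u.1).indicator (h k))) := fun u =>
    le_trans (mul_le_mul_right (lorentz_ind_fatou p r hae u.1) _)
      (ENN.const_mul_liminf_le ENNReal.ofReal_ne_top _)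
  rcases eq_or_ne q ∞ with hq | hq
  · simp only [herzNorm, herzNormWith, if_pos hq]
    refine iSup_le fun u => le_trans (hterm u) (liminf_le_liminf ?_)
    exact Eventually.of_forall fun k => le_iSup (fun v : {v : ℤ // -1 ≤ v} =>
      ENNReal.ofReal ((2 : ℝ) ^ ((v.1 : ℝ) * a)) *
        lorentzNorm μ p r ((annulus Ω v.1).indicator (h k))) u
  · simp only [herzNorm, herzNormWith, if_neg hq]
    set ρ := q.toReal
    have hsum : (∑' u : {u : ℤ // -1 ≤ u},
        (ENNReal.ofReal ((2 : ℝ) ^ ((u.1 : ℝ) * a)) *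
          lorentzNorm μ p r ((annulus Ω u.1).indicator H)) ^ ρ)
        ≤ atTop.liminf (fun k => ∑' u : {u : ℤ // -1 ≤ u},
          (ENNReal.ofReal ((2 : ℝ) ^ ((u.1 : ℝ) * a)) *
            lorentzNorm μ p r ((annulus Ω u.1).indicator (h k))) ^ ρ) := by
      refine le_trans (ENNReal.tsum_le_tsum fun u => ?_) (ENN.tsum_liminf_le _)
      exact le_trans (ENNReal.rpow_le_rpow (hterm u) ENNReal.toReal_nonneg)
        (ENN.rpow_liminf_le ENNReal.toReal_nonneg _)
    exact le_trans (ENNReal.rpow_le_rpow hsum (by positivity))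
      (ENN.rpow_liminf_le (by positivity) _)

lemma ENN.add_rpow_le {x y : ℝ≥0∞} {ρ : ℝ} (hρ : 0 ≤ ρ) :
    (x + y) ^ ρ ≤ 2 ^ ρ * (x ^ ρ + y ^ ρ) := by
  have h1 : x + y ≤ 2 * (x ⊔ y) := by
    rw [two_mul]
    exact add_le_add le_sup_left le_sup_right
  calc (x + y) ^ ρ ≤ (2 * (x ⊔ y)) ^ ρ := ENNReal.rpow_le_rpow h1 hρ
    _ = 2 ^ ρ * (x ⊔ y) ^ ρ := ENNReal.mul_rpow_of_nonneg _ _ hρ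
    _ ≤ 2 ^ ρ * (x ^ ρ + y ^ ρ) := by
        refine mul_le_mul_right ?_ _
        rcases le_total x y with h | h
        · exact le_trans (ENNReal.rpow_le_rpow (sup_le h le_rfl) hρ) le_add_self
        · exact le_trans (ENNReal.rpow_le_rpow (sup_le le_rfl h) hρ) le_self_add

lemma lintegral_half {G : ℝ → ℝ≥0∞} (hG : Measurable G) :
    ∫⁻ t in Set.Ioi (0:ℝ), G (t / 2) = 2 * ∫⁻ s in Set.Ioi (0:ℝ), G s := by
  have hT : Measurable fun s : ℝ => 2 * s := (measurable_const.mul measurable_id)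
  have hmap : Measure.map (fun s : ℝ => 2 * s) volume = ENNReal.ofReal (1/2) • volume := by
    rw [Real.map_volume_mul_left (by norm_num : (2:ℝ) ≠ 0)]
    congr 1
    rw [abs_of_pos (by norm_num : (0:ℝ) < (2:ℝ)⁻¹)]
    norm_num
  have hpre : (fun s : ℝ => 2 * s) ⁻¹' (Set.Ioi 0) = Set.Ioi 0 := by
    ext s; simp [Set.mem_Ioi]
  have hmapr : Measure.map (fun s:ℝ => 2*s) (volume.restrict (Set.Ioi 0))
      = ENNReal.ofReal (1/2) • (volume.restrict (Set.Ioi 0)) := by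
    have := Measure.restrict_map (μ := (volume : Measure ℝ)) hT (measurableSet_Ioi (a := (0:ℝ)))
    rw [hpre] at this
    rw [← this, hmap, Measure.restrict_smul]
  have key : ∫⁻ s in Set.Ioi (0:ℝ), G s
      = ENNReal.ofReal (1/2) * ∫⁻ t in Set.Ioi (0:ℝ), G (t/2) := by
    calc ∫⁻ s in Set.Ioi (0:ℝ), G s
        = ∫⁻ s in Set.Ioi (0:ℝ), (fun t => G (t/2)) (2 * s) :=
          lintegral_congr fun s => by
            show G s = G (2 * s / 2)
            rw [show 2 * s / 2 = s by ring]
      _ = ∫⁻ t, (fun t => G (t/2)) t ∂(Measure.map (fun s:ℝ => 2*s) (volume.restrict (Set.Ioi 0))) :=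
          (lintegral_map (hG.comp (measurable_id.div_const 2)) hT).symm
      _ = ENNReal.ofReal (1/2) * ∫⁻ t in Set.Ioi (0:ℝ), G (t/2) := by
          rw [hmapr, lintegral_smul_measure, smul_eq_mul]
  rw [key, ← mul_assoc]
  have : (2:ℝ≥0∞) * ENNReal.ofReal (1/2) = 1 := by
    rw [show (2:ℝ≥0∞) = ENNReal.ofReal 2 by norm_num, ← ENNReal.ofReal_mul (by norm_num)]
    norm_num
  rw [this, one_mul]

lemma exists_lorentz_triangle [MeasurableSpace X] (μ : Measure X) (p r : ℝ≥0∞) :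
    ∃ K : ℝ≥0∞, K ≠ ∞ ∧ ∀ f g : X → ℝ,
      lorentzNorm μ p r (f + g) ≤ K * (lorentzNorm μ p r f + lorentzNorm μ p r g) := by
  set c2 : ℝ≥0∞ := ENNReal.ofReal ((2:ℝ) ^ p.toReal⁻¹) with hc2
  have hc2top : c2 ≠ ∞ := ENNReal.ofReal_ne_top
  have hkey : ∀ (f g : X → ℝ) (t : ℝ), 0 < t →
      rearr μ (f + g) t ≤ rearr μ f (t/2) + rearr μ g (t/2) := by
    intro f g t ht
    have := rearr_add_le μ f g (s := t/2) (t := t/2) (by linarith) (by linarith)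
    simpa [add_halves] using this
  rcases eq_or_ne r ∞ with hr | hr
  · refine ⟨c2, hc2top, fun f g => ?_⟩
    simp only [lorentzNorm, lorentzNormOf, if_pos hr]
    refine iSup_le fun t => ?_
    have hhalf : (0:ℝ) < t.1 / 2 := by have := t.2; linarith
    have hb : ∀ (f : X → ℝ), ENNReal.ofReal (t.1 ^ p.toReal⁻¹) * rearr μ f (t.1/2)
        ≤ c2 * ⨆ s : {s : ℝ // 0 < s}, ENNReal.ofReal (s.1 ^ p.toReal⁻¹) * rearr μ f s.1 := by
      intro f
      have heq : t.1 = 2 * (t.1/2) := by ring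
      have h1 : ENNReal.ofReal (t.1 ^ p.toReal⁻¹)
          ≤ c2 * ENNReal.ofReal ((t.1/2) ^ p.toReal⁻¹) := by
        rw [hc2, ← ENNReal.ofReal_mul (Real.rpow_nonneg (by norm_num) _)]
        refine ENNReal.ofReal_le_ofReal ?_
        rw [← Real.mul_rpow (by norm_num) hhalf.le, ← heq]
      calc ENNReal.ofReal (t.1 ^ p.toReal⁻¹) * rearr μ f (t.1/2)
          ≤ (c2 * ENNReal.ofReal ((t.1/2) ^ p.toReal⁻¹)) * rearr μ f (t.1/2) :=
            mul_le_mul_left h1 _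
        _ = c2 * (ENNReal.ofReal ((t.1/2) ^ p.toReal⁻¹) * rearr μ f (t.1/2)) := by ring
        _ ≤ _ := mul_le_mul_right (le_iSup (fun s : {s : ℝ // 0 < s} =>
            ENNReal.ofReal (s.1 ^ p.toReal⁻¹) * rearr μ f s.1) ⟨t.1/2, hhalf⟩) _
    calc ENNReal.ofReal (t.1 ^ p.toReal⁻¹) * rearr μ (f + g) t.1
        ≤ ENNReal.ofReal (t.1 ^ p.toReal⁻¹) * (rearr μ f (t.1/2) + rearr μ g (t.1/2)) :=
          mul_le_mul_right (hkey f g t.1 t.2) _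
      _ = ENNReal.ofReal (t.1 ^ p.toReal⁻¹) * rearr μ f (t.1/2)
          + ENNReal.ofReal (t.1 ^ p.toReal⁻¹) * rearr μ g (t.1/2) := by ring
      _ ≤ _ := by
          rw [mul_add]
          exact add_le_add (hb f) (hb g)
  · set ρ := r.toReal with hρdef
    have hρ : 0 ≤ ρ := ENNReal.toReal_nonneg
    set K0 : ℝ≥0∞ := 2 ^ ρ * (2 * c2 ^ ρ) with hK0
    have hK0top : K0 ≠ ∞ := by
      apply ENNReal.mul_ne_top (ENNReal.rpow_ne_top_of_nonneg hρ (by norm_num))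
      exact ENNReal.mul_ne_top (by norm_num) (ENNReal.rpow_ne_top_of_nonneg hρ hc2top)
    refine ⟨K0 ^ ρ⁻¹ * 2 ^ ρ⁻¹, ENNReal.mul_ne_top
      (ENNReal.rpow_ne_top_of_nonneg (by positivity) hK0top)
      (ENNReal.rpow_ne_top_of_nonneg (by positivity) (by norm_num)), fun f g => ?_⟩
    simp only [lorentzNorm, lorentzNormOf, if_neg hr, ← hρdef]
    set If : ℝ≥0∞ := ∫⁻ t in Set.Ioi (0:ℝ),
      (ENNReal.ofReal (t ^ p.toReal⁻¹) * rearr μ f t) ^ ρ / ENNReal.ofReal t with hIf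
    set Ig : ℝ≥0∞ := ∫⁻ t in Set.Ioi (0:ℝ),
      (ENNReal.ofReal (t ^ p.toReal⁻¹) * rearr μ g t) ^ ρ / ENNReal.ofReal t with hIg
    have hGm : ∀ h : X → ℝ, Measurable fun s : ℝ =>
        (ENNReal.ofReal ((2*s) ^ p.toReal⁻¹) * rearr μ h s) ^ ρ / ENNReal.ofReal (2*s) := by
      intro h
      apply Measurable.div
      · exact ((((Real.continuous_rpow_const (by positivity)).measurable.comp
          (measurable_const.mul measurable_id)).ennreal_ofReal.mul
          rearr_antitone.measurable).pow_const ρ)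
      · exact (measurable_const.mul measurable_id).ennreal_ofReal
    -- bound for the f-half integral
    have hhalfint : ∀ h : X → ℝ, (∫⁻ t in Set.Ioi (0:ℝ),
        (ENNReal.ofReal (t ^ p.toReal⁻¹) * rearr μ h (t/2)) ^ ρ / ENNReal.ofReal t)
        ≤ 2 * c2 ^ ρ * ∫⁻ t in Set.Ioi (0:ℝ),
          (ENNReal.ofReal (t ^ p.toReal⁻¹) * rearr μ h t) ^ ρ / ENNReal.ofReal t := by
      intro h
      have h1 : ∀ t : ℝ, (ENNReal.ofReal (t ^ p.toReal⁻¹) * rearr μ h (t/2)) ^ ρ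
          / ENNReal.ofReal t
          = (fun s => (ENNReal.ofReal ((2*s) ^ p.toReal⁻¹) * rearr μ h s) ^ ρ
            / ENNReal.ofReal (2*s)) (t/2) := by
        intro t
        have h2 : 2*(t/2) = t := by ring
        simp only [h2]
      calc (∫⁻ t in Set.Ioi (0:ℝ),
          (ENNReal.ofReal (t ^ p.toReal⁻¹) * rearr μ h (t/2)) ^ ρ / ENNReal.ofReal t)
          = ∫⁻ t in Set.Ioi (0:ℝ), (fun s => (ENNReal.ofReal ((2*s) ^ p.toReal⁻¹)
            * rearr μ h s) ^ ρ / ENNReal.ofReal (2*s)) (t/2) := by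
            congr 1; ext t; exact h1 t
        _ = 2 * ∫⁻ s in Set.Ioi (0:ℝ),
            (ENNReal.ofReal ((2*s) ^ p.toReal⁻¹) * rearr μ h s) ^ ρ / ENNReal.ofReal (2*s) :=
            lintegral_half (hGm h)
        _ ≤ 2 * ∫⁻ s in Set.Ioi (0:ℝ), c2 ^ ρ *
            ((ENNReal.ofReal (s ^ p.toReal⁻¹) * rearr μ h s) ^ ρ / ENNReal.ofReal s) := by
            refine mul_le_mul_right (setLIntegral_mono_ae (by
              exact (((((Real.continuous_rpow_const (by positivity)).measurable).ennreal_ofReal.mul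
                rearr_antitone.measurable).pow_const ρ).div
                measurable_id.ennreal_ofReal).const_mul _ |>.aemeasurable)
              (Eventually.of_forall fun s hs => ?_)) _
            have hs0 : (0:ℝ) < s := hs
            have hnum : ENNReal.ofReal ((2*s) ^ p.toReal⁻¹)
                ≤ c2 * ENNReal.ofReal (s ^ p.toReal⁻¹) := by
              rw [hc2, ← ENNReal.ofReal_mul (Real.rpow_nonneg (by norm_num : (0:ℝ) ≤ 2) _)]
              exact ENNReal.ofReal_le_ofReal
                (le_of_eq (Real.mul_rpow (by norm_num : (0:ℝ) ≤ 2) hs0.le))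
            have hden : ENNReal.ofReal s ≤ ENNReal.ofReal (2*s) :=
              ENNReal.ofReal_le_ofReal (by linarith)
            calc (ENNReal.ofReal ((2*s) ^ p.toReal⁻¹) * rearr μ h s) ^ ρ / ENNReal.ofReal (2*s)
                ≤ (c2 * ENNReal.ofReal (s ^ p.toReal⁻¹) * rearr μ h s) ^ ρ
                  / ENNReal.ofReal s :=
                  ENNReal.div_le_div
                    (ENNReal.rpow_le_rpow (mul_le_mul_left hnum _) hρ) hden
              _ = c2 ^ ρ * ((ENNReal.ofReal (s ^ p.toReal⁻¹) * rearr μ h s) ^ ρ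
                  / ENNReal.ofReal s) := by
                  rw [mul_assoc, ENNReal.mul_rpow_of_nonneg _ _ hρ, mul_div_assoc]
        _ = 2 * c2 ^ ρ * ∫⁻ s in Set.Ioi (0:ℝ),
            (ENNReal.ofReal (s ^ p.toReal⁻¹) * rearr μ h s) ^ ρ / ENNReal.ofReal s := by
            rw [lintegral_const_mul' _ _ (ENNReal.rpow_ne_top_of_nonneg hρ hc2top)]
            ring
    have hint : (∫⁻ t in Set.Ioi (0:ℝ),
        (ENNReal.ofReal (t ^ p.toReal⁻¹) * rearr μ (f+g) t) ^ ρ / ENNReal.ofReal t)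
        ≤ K0 * (If + Ig) := by
      have hpt : ∀ t ∈ Set.Ioi (0:ℝ),
          (ENNReal.ofReal (t ^ p.toReal⁻¹) * rearr μ (f+g) t) ^ ρ / ENNReal.ofReal t
          ≤ 2 ^ ρ * ((ENNReal.ofReal (t ^ p.toReal⁻¹) * rearr μ f (t/2)) ^ ρ / ENNReal.ofReal t
            + (ENNReal.ofReal (t ^ p.toReal⁻¹) * rearr μ g (t/2)) ^ ρ / ENNReal.ofReal t) := by
        intro t ht
        have h2 : (ENNReal.ofReal (t ^ p.toReal⁻¹) * rearr μ (f+g) t) ^ ρ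
            ≤ 2 ^ ρ * ((ENNReal.ofReal (t ^ p.toReal⁻¹) * rearr μ f (t/2)) ^ ρ
              + (ENNReal.ofReal (t ^ p.toReal⁻¹) * rearr μ g (t/2)) ^ ρ) := by
          refine le_trans (ENNReal.rpow_le_rpow (mul_le_mul_right (hkey f g t ht) _) hρ) ?_
          rw [mul_add]
          exact ENN.add_rpow_le hρ
        calc (ENNReal.ofReal (t ^ p.toReal⁻¹) * rearr μ (f+g) t) ^ ρ / ENNReal.ofReal t
            ≤ (2 ^ ρ * ((ENNReal.ofReal (t ^ p.toReal⁻¹) * rearr μ f (t/2)) ^ ρ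
              + (ENNReal.ofReal (t ^ p.toReal⁻¹) * rearr μ g (t/2)) ^ ρ)) / ENNReal.ofReal t :=
              ENNReal.div_le_div_right h2 _
          _ = _ := by rw [mul_div_assoc, ENNReal.add_div]
      have hmf : ∀ h : X → ℝ, Measurable fun t : ℝ =>
          (ENNReal.ofReal (t ^ p.toReal⁻¹) * rearr μ h (t/2)) ^ ρ / ENNReal.ofReal t := by
        intro h
        apply Measurable.div
        · exact (((Real.continuous_rpow_const (by positivity)).measurable.ennreal_ofReal.mul
            (rearr_antitone.measurable.comp (measurable_id.div_const 2))).pow_const ρ)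
        · exact measurable_id.ennreal_ofReal
      calc (∫⁻ t in Set.Ioi (0:ℝ),
          (ENNReal.ofReal (t ^ p.toReal⁻¹) * rearr μ (f+g) t) ^ ρ / ENNReal.ofReal t)
          ≤ ∫⁻ t in Set.Ioi (0:ℝ), 2 ^ ρ *
            ((ENNReal.ofReal (t ^ p.toReal⁻¹) * rearr μ f (t/2)) ^ ρ / ENNReal.ofReal t
            + (ENNReal.ofReal (t ^ p.toReal⁻¹) * rearr μ g (t/2)) ^ ρ / ENNReal.ofReal t) := by
            refine setLIntegral_mono_ae ?_ (Eventually.of_forall hpt)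
            exact (((hmf f).add (hmf g)).const_mul _).aemeasurable
        _ = 2 ^ ρ * ((∫⁻ t in Set.Ioi (0:ℝ),
            (ENNReal.ofReal (t ^ p.toReal⁻¹) * rearr μ f (t/2)) ^ ρ / ENNReal.ofReal t)
            + ∫⁻ t in Set.Ioi (0:ℝ),
            (ENNReal.ofReal (t ^ p.toReal⁻¹) * rearr μ g (t/2)) ^ ρ / ENNReal.ofReal t) := by
            rw [lintegral_const_mul' _ _ (ENNReal.rpow_ne_top_of_nonneg hρ (by norm_num)), lintegral_add_left (hmf f)]
        _ ≤ 2 ^ ρ * ((2 * c2 ^ ρ * If) + (2 * c2 ^ ρ * Ig)) := by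
            exact mul_le_mul_right (add_le_add (hhalfint f) (hhalfint g)) _
        _ = K0 * (If + Ig) := by rw [hK0]; ring
    calc (∫⁻ t in Set.Ioi (0:ℝ),
        (ENNReal.ofReal (t ^ p.toReal⁻¹) * rearr μ (f+g) t) ^ ρ / ENNReal.ofReal t) ^ ρ⁻¹
        ≤ (K0 * (If + Ig)) ^ ρ⁻¹ := ENNReal.rpow_le_rpow hint (by positivity)
      _ = K0 ^ ρ⁻¹ * (If + Ig) ^ ρ⁻¹ := ENNReal.mul_rpow_of_nonneg _ _ (by positivity)
      _ ≤ K0 ^ ρ⁻¹ * (2 ^ ρ⁻¹ * (If ^ ρ⁻¹ + Ig ^ ρ⁻¹)) :=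
          mul_le_mul_right (ENN.add_rpow_le (by positivity)) _
      _ = K0 ^ ρ⁻¹ * 2 ^ ρ⁻¹ * (If ^ ρ⁻¹ + Ig ^ ρ⁻¹) := by ring

lemma exists_herz_triangle [MeasurableSpace X] [Norm X] (μ : Measure X) (Ω : Set X) (a : ℝ)
    (p q r : ℝ≥0∞) :
    ∃ K : ℝ≥0∞, K ≠ ∞ ∧ ∀ f g : X → ℝ,
      herzNorm μ Ω a p q r (f + g) ≤ K * (herzNorm μ Ω a p q r f + herzNorm μ Ω a p q r g) := by
  obtain ⟨KL, hKLtop, hKL⟩ := exists_lorentz_triangle μ p r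
  have hind : ∀ (u : ℤ) (f g : X → ℝ),
      (annulus Ω u).indicator (f + g)
        = (annulus Ω u).indicator f + (annulus Ω u).indicator g := by
    intro u f g
    funext x
    by_cases hx : x ∈ annulus Ω u <;> simp [Set.indicator_apply, hx]
  have hterm : ∀ (u : ℤ) (f g : X → ℝ),
      lorentzNorm μ p r ((annulus Ω u).indicator (f + g))
        ≤ KL * (lorentzNorm μ p r ((annulus Ω u).indicator f)
          + lorentzNorm μ p r ((annulus Ω u).indicator g)) := by
    intro u f g
    rw [hind u f g]
    exact hKL _ _
  rcases eq_or_ne q ∞ with hq | hq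
  · refine ⟨KL, hKLtop, fun f g => ?_⟩
    simp only [herzNorm, herzNormWith, if_pos hq]
    refine iSup_le fun u => ?_
    calc ENNReal.ofReal ((2:ℝ) ^ ((u.1:ℝ) * a)) * lorentzNorm μ p r
          ((annulus Ω u.1).indicator (f + g))
        ≤ ENNReal.ofReal ((2:ℝ) ^ ((u.1:ℝ) * a)) * (KL *
          (lorentzNorm μ p r ((annulus Ω u.1).indicator f)
            + lorentzNorm μ p r ((annulus Ω u.1).indicator g))) :=
          mul_le_mul_right (hterm u.1 f g) _
      _ = KL * (ENNReal.ofReal ((2:ℝ) ^ ((u.1:ℝ) * a)) * lorentzNorm μ p r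
            ((annulus Ω u.1).indicator f)
          + ENNReal.ofReal ((2:ℝ) ^ ((u.1:ℝ) * a)) * lorentzNorm μ p r
            ((annulus Ω u.1).indicator g)) := by ring
      _ ≤ _ := by
          refine mul_le_mul_right (add_le_add ?_ ?_) _
          · exact le_iSup (fun v : {v : ℤ // -1 ≤ v} =>
              ENNReal.ofReal ((2:ℝ) ^ ((v.1:ℝ) * a)) * lorentzNorm μ p r
                ((annulus Ω v.1).indicator f)) u
          · exact le_iSup (fun v : {v : ℤ // -1 ≤ v} =>
              ENNReal.ofReal ((2:ℝ) ^ ((v.1:ℝ) * a)) * lorentzNorm μ p r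
                ((annulus Ω v.1).indicator g)) u
  · set ρ := q.toReal with hρdef
    have hρ : 0 ≤ ρ := ENNReal.toReal_nonneg
    refine ⟨(KL ^ ρ) ^ ρ⁻¹ * (2 ^ ρ) ^ ρ⁻¹ * 2 ^ ρ⁻¹, ?_, fun f g => ?_⟩
    · refine ENNReal.mul_ne_top (ENNReal.mul_ne_top ?_ ?_) ?_
      · exact ENNReal.rpow_ne_top_of_nonneg (by positivity)
          (ENNReal.rpow_ne_top_of_nonneg hρ hKLtop)
      · exact ENNReal.rpow_ne_top_of_nonneg (by positivity)
          (ENNReal.rpow_ne_top_of_nonneg hρ (by norm_num))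
      · exact ENNReal.rpow_ne_top_of_nonneg (by positivity) (by norm_num)
    · simp only [herzNorm, herzNormWith, if_neg hq, ← hρdef]
      set Sf : ℝ≥0∞ := ∑' u : {u : ℤ // -1 ≤ u},
        (ENNReal.ofReal ((2:ℝ) ^ ((u.1:ℝ) * a)) * lorentzNorm μ p r
          ((annulus Ω u.1).indicator f)) ^ ρ with hSf
      set Sg : ℝ≥0∞ := ∑' u : {u : ℤ // -1 ≤ u},
        (ENNReal.ofReal ((2:ℝ) ^ ((u.1:ℝ) * a)) * lorentzNorm μ p r
          ((annulus Ω u.1).indicator g)) ^ ρ with hSg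
      have hsum : (∑' u : {u : ℤ // -1 ≤ u},
          (ENNReal.ofReal ((2:ℝ) ^ ((u.1:ℝ) * a)) * lorentzNorm μ p r
            ((annulus Ω u.1).indicator (f + g))) ^ ρ)
          ≤ KL ^ ρ * 2 ^ ρ * (Sf + Sg) := by
        calc (∑' u : {u : ℤ // -1 ≤ u},
            (ENNReal.ofReal ((2:ℝ) ^ ((u.1:ℝ) * a)) * lorentzNorm μ p r
              ((annulus Ω u.1).indicator (f + g))) ^ ρ)
            ≤ ∑' u : {u : ℤ // -1 ≤ u}, KL ^ ρ * 2 ^ ρ *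
              ((ENNReal.ofReal ((2:ℝ) ^ ((u.1:ℝ) * a)) * lorentzNorm μ p r
                ((annulus Ω u.1).indicator f)) ^ ρ
              + (ENNReal.ofReal ((2:ℝ) ^ ((u.1:ℝ) * a)) * lorentzNorm μ p r
                ((annulus Ω u.1).indicator g)) ^ ρ) := by
              refine ENNReal.tsum_le_tsum fun u => ?_
              have h1 : ENNReal.ofReal ((2:ℝ) ^ ((u.1:ℝ) * a)) * lorentzNorm μ p r
                  ((annulus Ω u.1).indicator (f + g))
                  ≤ KL * (ENNReal.ofReal ((2:ℝ) ^ ((u.1:ℝ) * a)) * lorentzNorm μ p r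
                    ((annulus Ω u.1).indicator f)
                  + ENNReal.ofReal ((2:ℝ) ^ ((u.1:ℝ) * a)) * lorentzNorm μ p r
                    ((annulus Ω u.1).indicator g)) := by
                refine le_trans (mul_le_mul_right (hterm u.1 f g) _) (le_of_eq ?_)
                ring
              refine le_trans (ENNReal.rpow_le_rpow h1 hρ) ?_
              rw [ENNReal.mul_rpow_of_nonneg _ _ hρ, mul_assoc]
              exact mul_le_mul_right (ENN.add_rpow_le hρ) _
          _ = KL ^ ρ * 2 ^ ρ * (Sf + Sg) := by
              rw [ENNReal.tsum_mul_left, ENNReal.tsum_add]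
      calc (∑' u : {u : ℤ // -1 ≤ u},
          (ENNReal.ofReal ((2:ℝ) ^ ((u.1:ℝ) * a)) * lorentzNorm μ p r
            ((annulus Ω u.1).indicator (f + g))) ^ ρ) ^ ρ⁻¹
          ≤ (KL ^ ρ * 2 ^ ρ * (Sf + Sg)) ^ ρ⁻¹ := ENNReal.rpow_le_rpow hsum (by positivity)
        _ = (KL ^ ρ) ^ ρ⁻¹ * (2 ^ ρ) ^ ρ⁻¹ * (Sf + Sg) ^ ρ⁻¹ := by
            rw [ENNReal.mul_rpow_of_nonneg _ _ (by positivity),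
              ENNReal.mul_rpow_of_nonneg _ _ (by positivity : (0:ℝ) ≤ ρ⁻¹)]
        _ ≤ (KL ^ ρ) ^ ρ⁻¹ * (2 ^ ρ) ^ ρ⁻¹ * (2 ^ ρ⁻¹ * (Sf ^ ρ⁻¹ + Sg ^ ρ⁻¹)) :=
            mul_le_mul_right (ENN.add_rpow_le (by positivity)) _
        _ = (KL ^ ρ) ^ ρ⁻¹ * (2 ^ ρ) ^ ρ⁻¹ * 2 ^ ρ⁻¹ * (Sf ^ ρ⁻¹ + Sg ^ ρ⁻¹) := by ring

lemma exists_eps_herz [MeasurableSpace X] [Norm X] (μ : Measure X) (Ω : Set X) (a : ℝ)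
    {p q r : ℝ≥0∞} (hp0 : p ≠ 0) (hp : p ≠ ∞) (hq0 : q ≠ 0) (hr0 : r ≠ 0)
    {u : ℤ} (hu : -1 ≤ u) {lam δ : ℝ} (hlam : 0 < lam) (hδ : 0 < δ) :
    ∃ ε : ℝ≥0∞, 0 < ε ∧ ∀ h : X → ℝ, herzNorm μ Ω a p q r h < ε →
      μ (annulus Ω u ∩ {x | lam < |h x|}) ≤ ENNReal.ofReal δ := by
  obtain ⟨ε₀, hε₀, hprop⟩ := exists_eps_lorentz μ p r hp0 hp hr0 hlam hδ
  set c := ENNReal.ofReal ((2:ℝ) ^ ((u:ℝ)*a)) with hc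
  have hc0 : c ≠ 0 := (ENNReal.ofReal_pos.2 (Real.rpow_pos_of_pos two_pos _)).ne'
  have hctop : c ≠ ∞ := ENNReal.ofReal_ne_top
  refine ⟨c * ε₀, ENNReal.mul_pos hc0 hε₀.ne', fun h hh => ?_⟩
  have h1 : c * lorentzNorm μ p r ((annulus Ω u).indicator h) ≤ herzNorm μ Ω a p q r h :=
    term_le_herzNormWith Ω a hq0 (lorentzNorm μ p r) h hu
  have h2 : lorentzNorm μ p r ((annulus Ω u).indicator h) < ε₀ :=
    (ENNReal.mul_lt_mul_iff_right hc0 hctop).mp (lt_of_le_of_lt h1 hh)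
  refine le_trans (measure_mono ?_) (hprop _ h2)
  rintro x ⟨hxA, hxl⟩
  simp only [Set.mem_setOf_eq, Set.indicator_of_mem hxA]
  exact (ENNReal.ofReal_lt_ofReal_iff (lt_trans hlam hxl)).2 hxl


end AuxLorentzHerz

/-- For `a ∈ ℝ`, `0 < p < ∞` and `0 < q, r ≤ ∞`, the space
`HL^{a,r}_{p,q}(Ω)` is complete: every Cauchy sequence for the quasi-norm
converges, in quasi-norm, to an element of the space. -/
theorem lorentzHerz_complete {N : ℕ} (hN : 1 ≤ N)
    (Ω : Set (Euc N)) (hΩ : MeasurableSet Ω)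
    (a : ℝ) (p q r : ℝ≥0∞) (hp0 : 0 < p) (hp : p ≠ ∞) (hq : 0 < q) (hr : 0 < r)
    (f : ℕ → Euc N → ℝ) (hf : ∀ n, Measurable (f n))
    (hfin : ∀ n, herzNorm volume Ω a p q r (f n) < ∞)
    (hcauchy : ∀ ε : ℝ≥0∞, 0 < ε → ∃ M : ℕ, ∀ m n : ℕ, M ≤ m → M ≤ n →
      herzNorm volume Ω a p q r (f m - f n) < ε) :
    ∃ g : Euc N → ℝ, Measurable g ∧ herzNorm volume Ω a p q r g < ∞ ∧
      Filter.Tendsto (fun n => herzNorm volume Ω a p q r (f n - g))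
        Filter.atTop (nhds 0) := by
  classical
  set μ : Measure (Euc N) := volume with hμ
  -- selection of thresholds
  have hex : ∀ (u : {u : ℤ // -1 ≤ u}) (k : ℕ), ∃ ε : ℝ≥0∞, 0 < ε ∧ ∀ h : Euc N → ℝ,
      herzNorm μ Ω a p q r h < ε →
      μ (annulus Ω u.1 ∩ {x | (2⁻¹:ℝ)^k < |h x|}) ≤ ENNReal.ofReal ((2⁻¹:ℝ)^k) :=
    fun u k => exists_eps_herz μ Ω a hp0.ne' hp hq.ne' hr.ne' u.2
      (by positivity) (by positivity)
  choose ε' hε'pos hε'prop using hex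
  have hIccne : ∀ k : ℕ, (Finset.Icc (-1:ℤ) (k:ℤ)).Nonempty := by
    intro k
    refine ⟨-1, Finset.mem_Icc.2 ⟨le_rfl, ?_⟩⟩
    have : (0:ℤ) ≤ (k:ℤ) := Int.natCast_nonneg k
    linarith
  set gfun : ℕ → ℤ → ℝ≥0∞ := fun k u => if hu : -1 ≤ u then ε' ⟨u, hu⟩ k else 1 with hgfun
  set εk : ℕ → ℝ≥0∞ := fun k => (Finset.Icc (-1:ℤ) (k:ℤ)).inf' (hIccne k) (gfun k) with hεk
  have hεkpos : ∀ k, 0 < εk k := by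
    intro k
    rw [hεk]
    refine (Finset.lt_inf'_iff _).2 fun u hu => ?_
    by_cases hu1 : -1 ≤ u
    · simp only [hgfun, dif_pos hu1]
      exact hε'pos ⟨u, hu1⟩ k
    · simp only [hgfun, dif_neg hu1]
      norm_num
  have hεkle : ∀ (k : ℕ) (u : ℤ) (hu : -1 ≤ u), u ≤ (k:ℤ) → εk k ≤ ε' ⟨u, hu⟩ k := by
    intro k u hu huk
    have h1 := Finset.inf'_le (gfun k) (Finset.mem_Icc.2 ⟨hu, huk⟩)
    have h2 : gfun k u = ε' ⟨u, hu⟩ k := dif_pos hu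
    rw [h2] at h1
    exact h1
  -- the subsequence
  have hM : ∀ k : ℕ, ∃ M : ℕ, ∀ m n, M ≤ m → M ≤ n →
      herzNorm μ Ω a p q r (f m - f n) < εk k := fun k => hcauchy (εk k) (hεkpos k)
  choose M hMprop using hM
  set Nse : ℕ → ℕ := fun k => Nat.rec (M 0) (fun k ih => max (M (k+1)) (ih + 1)) k with hNse
  have hNsesucc : ∀ k, Nse (k+1) = max (M (k+1)) (Nse k + 1) := fun k => rfl
  have hNseM : ∀ k, M k ≤ Nse k := by
    intro k
    cases k with
    | zero => exact le_rfl
    | succ k => rw [hNsesucc]; exact le_max_left _ _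
  have hNsemono : Monotone Nse := by
    refine monotone_nat_of_le_succ fun k => ?_
    rw [hNsesucc]
    exact le_trans (Nat.le_succ _) (le_max_right _ _)
  have hNsege : ∀ k, k ≤ Nse k := by
    intro k
    induction k with
    | zero => exact Nat.zero_le _
    | succ k ih => rw [hNsesucc]; exact le_trans (Nat.succ_le_succ ih) (le_max_right _ _)
  -- step bounds
  have hstep : ∀ (k : ℕ) (u : ℤ) (hu : -1 ≤ u), u ≤ (k:ℤ) →
      μ (annulus Ω u ∩ {x | (2⁻¹:ℝ)^k < |(f (Nse (k+1)) - f (Nse k)) x|})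
        ≤ ENNReal.ofReal ((2⁻¹:ℝ)^k) := by
    intro k u hu huk
    refine hε'prop ⟨u, hu⟩ k _ (lt_of_lt_of_le ?_ (hεkle k u hu huk))
    exact hMprop k _ _ (le_trans (hNseM k) (hNsemono (Nat.le_succ k))) (hNseM k)
  -- a.e. convergence on Ω
  have haeconv : ∀ᵐ x ∂μ, x ∈ Ω → ∃ l : ℝ, Tendsto (fun j => f (Nse j) x) atTop (𝓝 l) := by
    have hu_ae : ∀ (u : {u : ℤ // -1 ≤ u}), ∀ᵐ x ∂μ, x ∈ annulus Ω u.1 →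
        ∃ l : ℝ, Tendsto (fun j => f (Nse j) x) atTop (𝓝 l) := by
      intro u
      set K := u.1.toNat with hK
      set F : ℕ → Set (Euc N) := fun j => annulus Ω u.1 ∩
        {x | (2⁻¹:ℝ)^(j+K) < |(f (Nse (j+K+1)) - f (Nse (j+K))) x|} with hF
      have hFle : ∀ j, μ (F j) ≤ ENNReal.ofReal ((2⁻¹:ℝ)^(j+K)) := by
        intro j
        refine hstep (j+K) u.1 u.2 ?_
        calc u.1 ≤ (u.1.toNat : ℤ) := Int.self_le_toNat u.1
          _ ≤ ((j + K : ℕ) : ℤ) := by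
              rw [hK]; exact_mod_cast Nat.le_add_left _ _
      have hFsum : (∑' j, μ (F j)) ≠ ∞ := by
        have hterm : ∀ j : ℕ, μ (F j) ≤ (ENNReal.ofReal 2⁻¹) ^ j := by
          intro j
          refine le_trans (hFle j) ?_
          rw [← ENNReal.ofReal_pow (by norm_num)]
          refine ENNReal.ofReal_le_ofReal ?_
          rw [pow_add]
          refine mul_le_of_le_one_right (by positivity) ?_
          exact pow_le_one₀ (by norm_num) (by norm_num)
        refine ne_top_of_le_ne_top ?_ (le_trans (ENNReal.tsum_le_tsum hterm)
          (le_of_eq (ENNReal.tsum_geometric _)))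
        refine ENNReal.inv_ne_top.2 ?_
        have : ENNReal.ofReal 2⁻¹ < 1 := ENNReal.ofReal_lt_one.2 (by norm_num)
        exact (tsub_pos_of_lt this).ne'
      filter_upwards [ae_eventually_notMem hFsum] with x hx hxA
      have hev : ∀ᶠ j in atTop, |f (Nse (j+K+1)) x - f (Nse (j+K)) x| ≤ (2⁻¹:ℝ)^(j+K) := by
        filter_upwards [hx] with j hj
        by_contra hc
        push_neg at hc
        exact hj ⟨hxA, by simpa using hc⟩
      obtain ⟨J0, hJ0⟩ := eventually_atTop.mp hev
      have hall : ∀ m, J0 + K ≤ m → |f (Nse (m+1)) x - f (Nse m) x| ≤ (2⁻¹:ℝ)^m := by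
        intro m hm
        have hmK : K ≤ m := le_trans (Nat.le_add_left _ _) hm
        have hj : J0 ≤ m - K := by omega
        have := hJ0 (m - K) hj
        rwa [Nat.sub_add_cancel hmK] at this
      set dseq : ℕ → ℝ := fun m =>
        if m < J0 + K then dist (f (Nse m) x) (f (Nse (m+1)) x) else (2⁻¹:ℝ)^m with hdseq
      have hd : ∀ m, dist (f (Nse m) x) (f (Nse (m+1)) x) ≤ dseq m := by
        intro m
        by_cases hm : m < J0 + K
        · simp [hdseq, hm]
        · simp only [hdseq, if_neg hm]
          rw [Real.dist_eq, abs_sub_comm]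
          exact hall m (le_of_not_gt hm)
      have hds : Summable dseq := by
        rw [← summable_nat_add_iff (J0 + K)]
        have heq : (fun m => dseq (m + (J0+K))) = fun m => (2⁻¹:ℝ)^(m + (J0+K)) := by
          funext m
          exact if_neg (by omega)
        rw [heq]
        simp_rw [pow_add]
        exact Summable.mul_right _ (summable_geometric_of_lt_one (by norm_num) (by norm_num))
      have hcs : CauchySeq (fun j => f (Nse j) x) :=
        cauchySeq_of_dist_le_of_summable dseq hd hds
      exact cauchySeq_tendsto_of_complete hcs
    filter_upwards [ae_all_iff.2 hu_ae] with x hx hxΩ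
    obtain ⟨s, ⟨u, rfl⟩, hxu⟩ := Omega_subset_iUnion Ω hxΩ
    exact hx u hxu
  -- the limit function
  have haeind : ∀ᵐ x ∂μ, ∃ l : ℝ,
      Tendsto (fun j => Ω.indicator (f (Nse j)) x) atTop (𝓝 l) := by
    filter_upwards [haeconv] with x hx
    by_cases hxΩ : x ∈ Ω
    · obtain ⟨l, hl⟩ := hx hxΩ
      exact ⟨l, by simpa [Set.indicator_of_mem hxΩ] using hl⟩
    · exact ⟨0, by simpa [Set.indicator_of_notMem hxΩ] using
        (tendsto_const_nhds : Tendsto (fun _ : ℕ => (0:ℝ)) atTop (𝓝 0))⟩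
  obtain ⟨g, hgmeas, hgtend⟩ := measurable_limit_of_tendsto_metrizable_ae
    (fun j => ((hf (Nse j)).indicator hΩ).aemeasurable) haeind
  have hgΩ : ∀ᵐ x ∂μ, x ∈ Ω → Tendsto (fun j => f (Nse j) x) atTop (𝓝 (g x)) := by
    filter_upwards [hgtend] with x hx hxΩ
    simpa [Set.indicator_of_mem hxΩ] using hx
  refine ⟨g, hgmeas, ?_, ?_⟩
  · -- finiteness
    obtain ⟨K2, hK2top, hK2⟩ := exists_herz_triangle μ Ω a p q r
    obtain ⟨M1, hM1⟩ := hcauchy 1 one_pos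
    have hdiff : herzNorm μ Ω a p q r (g - f (Nse M1)) ≤ 1 := by
      have hae : ∀ᵐ x ∂μ, x ∈ Ω → Tendsto (fun j => (f (Nse j) - f (Nse M1)) x) atTop
          (𝓝 ((g - f (Nse M1)) x)) := by
        filter_upwards [hgΩ] with x hx hxΩ
        have := (hx hxΩ).sub_const (f (Nse M1) x)
        simpa [Pi.sub_apply] using this
      refine le_trans (herzNorm_fatou a p q r hae) ?_
      have hev : ∀ᶠ j in atTop,
          herzNorm μ Ω a p q r (f (Nse j) - f (Nse M1)) ≤ (1:ℝ≥0∞) := by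
        refine eventually_atTop.2 ⟨M1, fun j hj => ?_⟩
        exact (hM1 _ _ (le_trans hj (hNsege j)) (le_trans (le_refl M1) (hNsege M1))).le
      refine le_trans (liminf_le_liminf hev) ?_
      simp [liminf_const]
    have hg_eq : g = f (Nse M1) + (g - f (Nse M1)) := by
      funext x
      simp
    calc herzNorm μ Ω a p q r g
        = herzNorm μ Ω a p q r (f (Nse M1) + (g - f (Nse M1))) := by rw [← hg_eq]
      _ ≤ K2 * (herzNorm μ Ω a p q r (f (Nse M1))
          + herzNorm μ Ω a p q r (g - f (Nse M1))) := hK2 _ _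
      _ < ∞ := ENNReal.mul_lt_top hK2top.lt_top
          (ENNReal.add_lt_top.2 ⟨hfin _, lt_of_le_of_lt hdiff (by norm_num)⟩)
  · -- convergence
    refine ENNReal.tendsto_nhds_zero.2 fun ε hε => ?_
    obtain ⟨Mε, hMε⟩ := hcauchy ε hε
    refine eventually_atTop.2 ⟨Mε, fun n hn => ?_⟩
    have hae : ∀ᵐ x ∂μ, x ∈ Ω → Tendsto (fun j => (f n - f (Nse j)) x) atTop
        (𝓝 ((f n - g) x)) := by
      filter_upwards [hgΩ] with x hx hxΩ
      have := (hx hxΩ).const_sub (f n x)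
      simpa [Pi.sub_apply] using this
    refine le_trans (herzNorm_fatou a p q r hae) ?_
    have hev : ∀ᶠ j in atTop, herzNorm μ Ω a p q r (f n - f (Nse j)) ≤ ε := by
      refine eventually_atTop.2 ⟨Mε, fun j hj => ?_⟩
      exact (hMε n (Nse j) hn (le_trans hj (hNsege j))).le
    refine le_trans (liminf_le_liminf hev) ?_
    simp [liminf_const]
end

section
/- Let 0 < p, q, r < ∞ and a > 0. Then there exists a Lebesgue-measurable set E ⊆ ℝ with finite Lebesgue measure such that ‖χ_E‖_{HL^{a,r}_{p,q}(ℝ)} = ∞. (Concretely, E = ⋃_{u≥1} B_u with B_u = {x ∈ ℝ : 2^u − 1/u² ≤ |x| < 2^u} has measure Σ_{u≥1} 2/u² < ∞, yet Σ_{u≥1} 2^{uaq} (2/u²)^{q/p} = ∞.) In particular, the Lorentz–Herz spaces are not Banach function spaces in general. -/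
open MeasureTheory ENNReal Set Filter Topology

def mset (b : ℝ) (n : ℕ) : Set ℝ :=
  Set.Ico ((2:ℝ)^((n:ℤ)-1)) ((2:ℝ)^((n:ℤ)-1) + 2*(2:ℝ)^(-(n:ℝ)*b))

lemma rearr_indicator_one {B : Set ℝ} {s : ℝ} (h : ENNReal.ofReal s < volume B) :
    rearr volume (B.indicator fun _ => (1:ℝ)) s = 1 := by
  have hval1 : ∀ x ∈ B, ENNReal.ofReal |B.indicator (fun _ => (1:ℝ)) x| = 1 := by
    intro x hx; simp [Set.indicator_of_mem hx]
  have hval0 : ∀ x ∉ B, ENNReal.ofReal |B.indicator (fun _ => (1:ℝ)) x| = 0 := by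
    intro x hx; simp [Set.indicator_of_notMem hx]
  have hle : ∀ x : ℝ, ENNReal.ofReal |B.indicator (fun _ => (1:ℝ)) x| ≤ 1 := by
    intro x
    by_cases hx : x ∈ B
    · rw [hval1 x hx]
    · rw [hval0 x hx]; exact zero_le_one
  have hset : {α : ℝ≥0∞ | volume {x | α < ENNReal.ofReal |B.indicator (fun _ => (1:ℝ)) x|}
      ≤ ENNReal.ofReal s} = Set.Ici 1 := by
    ext α
    simp only [Set.mem_setOf_eq, Set.mem_Ici]
    constructor
    · intro hα
      by_contra hα1
      push_neg at hα1
      have hsub : B ⊆ {x | α < ENNReal.ofReal |B.indicator (fun _ => (1:ℝ)) x|} := by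
        intro x hx
        simp only [Set.mem_setOf_eq, hval1 x hx]
        exact hα1
      exact absurd hα (not_le.2 (lt_of_lt_of_le h (le_trans (measure_mono hsub) le_rfl)))
    · intro hα1
      have hempty : {x | α < ENNReal.ofReal |B.indicator (fun _ => (1:ℝ)) x|} = ∅ := by
        ext x
        simp only [Set.mem_setOf_eq, Set.mem_empty_iff_false, iff_false, not_lt]
        exact le_trans (hle x) hα1
      rw [hempty]
      simp
  rw [rearr, hset, csInf_Ici]

lemma lorentzNorm_indicator_ge (p r : ℝ≥0∞) (hp0 : 0 < p) (hp : p ≠ ∞)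
    (hr0 : 0 < r) (hr : r ≠ ∞) {B : Set ℝ} {m : ℝ} (hm : 0 < m)
    (hB : ENNReal.ofReal m ≤ volume B) :
    ENNReal.ofReal ((m/2) ^ p.toReal⁻¹ * (2:ℝ)⁻¹ ^ r.toReal⁻¹)
      ≤ lorentzNorm volume p r (B.indicator fun _ => (1:ℝ)) := by
  have hpt : 0 < p.toReal := ENNReal.toReal_pos hp0.ne' hp
  have hrt : 0 < r.toReal := ENNReal.toReal_pos hr0.ne' hr
  have hm2 : 0 < m / 2 := by linarith
  set c0 : ℝ≥0∞ := (ENNReal.ofReal ((m/2) ^ p.toReal⁻¹)) ^ r.toReal / ENNReal.ofReal m with hc0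
  have key : ENNReal.ofReal ((m/2) ^ (p.toReal⁻¹ * r.toReal) * 2⁻¹)
      ≤ ∫⁻ t in Set.Ioi (0 : ℝ),
      (ENNReal.ofReal (t ^ p.toReal⁻¹) * rearr volume (B.indicator fun _ => (1:ℝ)) t) ^ r.toReal
        / ENNReal.ofReal t := by
    have h1 : ∫⁻ t in Set.Ioo (m/2) m, c0 ∂volume
        ≤ ∫⁻ t in Set.Ioo (m/2) m,
          (ENNReal.ofReal (t ^ p.toReal⁻¹) * rearr volume (B.indicator fun _ => (1:ℝ)) t) ^ r.toReal
            / ENNReal.ofReal t := by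
      apply setLIntegral_mono' measurableSet_Ioo
      intro t ht
      have ht1 : m/2 < t := ht.1
      have ht2 : t < m := ht.2
      have htpos : 0 < t := lt_trans hm2 ht1
      have hre : rearr volume (B.indicator fun _ => (1:ℝ)) t = 1 :=
        rearr_indicator_one (lt_of_lt_of_le ((ENNReal.ofReal_lt_ofReal_iff hm).2 ht2) hB)
      rw [hre, mul_one, hc0]
      refine ENNReal.div_le_div ?_ (ENNReal.ofReal_le_ofReal ht2.le)
      exact ENNReal.rpow_le_rpow (ENNReal.ofReal_le_ofReal
        (Real.rpow_le_rpow hm2.le ht1.le (inv_nonneg.2 hpt.le))) hrt.le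
    have h2 : ∫⁻ _ in Set.Ioo (m/2) m, c0 ∂volume = c0 * ENNReal.ofReal (m/2) := by
      rw [setLIntegral_const, Real.volume_Ioo]
      congr 1
      congr 1
      ring
    have h3 : c0 * ENNReal.ofReal (m/2) = ENNReal.ofReal ((m/2) ^ (p.toReal⁻¹ * r.toReal) * 2⁻¹) := by
      have h2m : m / 2 / m = 2⁻¹ := by
        rw [div_div, mul_comm, ← div_div, div_self hm.ne', one_div]
      rw [hc0, ENNReal.ofReal_rpow_of_nonneg (Real.rpow_nonneg hm2.le _) hrt.le,
        ← Real.rpow_mul hm2.le, div_eq_mul_inv, mul_right_comm, ← div_eq_mul_inv,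
        ← ENNReal.ofReal_mul (Real.rpow_nonneg hm2.le _),
        ← ENNReal.ofReal_div_of_pos hm, mul_div_assoc, h2m]
    calc ENNReal.ofReal ((m/2) ^ (p.toReal⁻¹ * r.toReal) * 2⁻¹) = c0 * ENNReal.ofReal (m/2) := h3.symm
      _ = ∫⁻ _ in Set.Ioo (m/2) m, c0 ∂volume := h2.symm
      _ ≤ _ := h1
      _ ≤ _ := lintegral_mono_set (fun x hx => lt_trans hm2 hx.1)
  rw [lorentzNorm, lorentzNormOf, if_neg hr]
  calc ENNReal.ofReal ((m/2) ^ p.toReal⁻¹ * (2:ℝ)⁻¹ ^ r.toReal⁻¹)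
      = (ENNReal.ofReal ((m/2) ^ (p.toReal⁻¹ * r.toReal) * 2⁻¹)) ^ r.toReal⁻¹ := by
        rw [ENNReal.ofReal_rpow_of_nonneg (by positivity) (inv_nonneg.2 hrt.le),
          Real.mul_rpow (by positivity) (by norm_num), ← Real.rpow_mul hm2.le,
          mul_assoc, mul_inv_cancel₀ hrt.ne', mul_one]
    _ ≤ _ := ENNReal.rpow_le_rpow key (inv_nonneg.2 hrt.le)

lemma mset_volume (b : ℝ) (n : ℕ) :
    volume (mset b n) = ENNReal.ofReal (2*(2:ℝ)^(-(n:ℝ)*b)) := by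
  rw [mset, Real.volume_Ico, add_sub_cancel_left]

lemma mset_subset {b : ℝ} (hb : 0 < b) {n : ℕ} (hn : 2 ≤ n) :
    mset b n ⊆ Set.Ico ((2:ℝ)^((n:ℤ)-1)) ((2:ℝ)^(n:ℤ)) := by
  intro x hx
  refine ⟨hx.1, lt_of_lt_of_le hx.2 ?_⟩
  have h0 : (2:ℝ)^(-(n:ℝ)*b) ≤ 1 := by
    refine Real.rpow_le_one_of_one_le_of_nonpos one_le_two ?_
    have hn0 : (0:ℝ) ≤ (n:ℝ) := Nat.cast_nonneg n
    nlinarith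
  have h1 : 2*(2:ℝ)^(-(n:ℝ)*b) ≤ 2 := by linarith
  have h2 : (2:ℝ) ≤ (2:ℝ)^((n:ℤ)-1) := by
    calc (2:ℝ) = (2:ℝ)^(1:ℤ) := by norm_num
      _ ≤ _ := zpow_le_zpow_right₀ one_le_two (by omega)
  calc (2:ℝ)^((n:ℤ)-1) + 2*(2:ℝ)^(-(n:ℝ)*b) ≤ (2:ℝ)^((n:ℤ)-1) + (2:ℝ)^((n:ℤ)-1) := by linarith
    _ = (2:ℝ)^(n:ℤ) := by
        rw [← two_mul, mul_comm, ← zpow_add_one₀ (by norm_num : (2:ℝ) ≠ 0) ((n:ℤ)-1),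
          sub_add_cancel]

lemma annulus_inter {b : ℝ} (hb : 0 < b) {n : ℕ} (hn : 2 ≤ n) :
    annulus (Set.univ : Set ℝ) (n:ℤ) ∩ (⋃ i : ℕ, mset b (i+2)) = mset b n := by
  have hne : (n:ℤ) ≠ -1 := by omega
  have hann : annulus (Set.univ : Set ℝ) (n:ℤ)
      = {x : ℝ | (2:ℝ)^((n:ℤ)-1) ≤ |x| ∧ |x| < (2:ℝ)^(n:ℤ)} := by
    rw [annulus, if_neg hne]
    ext x; simp [Real.norm_eq_abs]
  ext x
  simp only [hann, Set.mem_inter_iff, Set.mem_iUnion, Set.mem_setOf_eq]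
  constructor
  · rintro ⟨⟨hx1, hx2⟩, i, hxi⟩
    have hsub := mset_subset hb (by omega : 2 ≤ i + 2) hxi
    have hxpos : 0 < x := lt_of_lt_of_le (zpow_pos (by norm_num : (0:ℝ) < 2) _) hsub.1
    rw [abs_of_pos hxpos] at hx1 hx2
    have hieq : i + 2 = n := by
      by_contra hne'
      rcases lt_or_gt_of_ne hne' with hlt | hgt
      · have : (2:ℝ)^((i:ℤ)+2) ≤ (2:ℝ)^((n:ℤ)-1) :=
          zpow_le_zpow_right₀ one_le_two (by omega)
        have := hsub.2
        push_cast at this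
        linarith
      · have : (2:ℝ)^(n:ℤ) ≤ (2:ℝ)^((i:ℤ)+2-1) :=
          zpow_le_zpow_right₀ one_le_two (by omega)
        have h2 := hsub.1
        push_cast at h2
        linarith
    rw [← hieq]
    exact hxi
  · intro hx
    have hsub := mset_subset hb hn hx
    have hxpos : 0 < x := lt_of_lt_of_le (zpow_pos (by norm_num : (0:ℝ) < 2) _) hsub.1
    refine ⟨⟨?_, ?_⟩, ⟨n - 2, ?_⟩⟩
    · rw [abs_of_pos hxpos]; exact hsub.1
    · rw [abs_of_pos hxpos]; exact hsub.2
    · have : n - 2 + 2 = n := by omega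
      rw [this]; exact hx


/-- For `0 < p, q, r < ∞` and `a > 0` there is a Lebesgue-measurable
set `E ⊆ ℝ` of finite measure whose characteristic function has infinite
Lorentz–Herz quasi-norm `‖χ_E‖_{HL^{a,r}_{p,q}(ℝ)} = ∞`.  In particular the
Lorentz–Herz spaces are not Banach function spaces in general. -/
theorem lorentzHerz_not_BFS (a : ℝ) (ha : 0 < a) (p q r : ℝ≥0∞)
    (hp0 : 0 < p) (hp : p ≠ ∞) (hq0 : 0 < q) (hq : q ≠ ∞)
    (hr0 : 0 < r) (hr : r ≠ ∞) :
    ∃ E : Set ℝ, MeasurableSet E ∧ volume E < ∞ ∧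
      herzNorm volume (Set.univ : Set ℝ) a p q r (E.indicator fun _ => (1 : ℝ)) = ∞ := by
  have hpt : 0 < p.toReal := ENNReal.toReal_pos hp0.ne' hp
  have hqt : 0 < q.toReal := ENNReal.toReal_pos hq0.ne' hq
  have hrt : 0 < r.toReal := ENNReal.toReal_pos hr0.ne' hr
  set b := a * p.toReal with hbdef
  have hb : 0 < b := mul_pos ha hpt
  refine ⟨⋃ i : ℕ, mset b (i+2), MeasurableSet.iUnion fun i => measurableSet_Ico, ?_, ?_⟩
  · refine lt_of_le_of_lt (measure_iUnion_le _) ?_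
    have heq : ∀ i : ℕ, volume (mset b (i+2))
        = ENNReal.ofReal (2*(2:ℝ)^(-(2:ℝ)*b)) * (ENNReal.ofReal ((2:ℝ)^(-b)))^i := by
      intro i
      rw [mset_volume, ← ENNReal.ofReal_pow (by positivity), ← ENNReal.ofReal_mul (by positivity)]
      congr 1
      have hexp : -(((i:ℕ)+2:ℕ):ℝ)*b = (-(2:ℝ)*b) + (-b * (i:ℝ)) := by push_cast; ring
      rw [hexp, Real.rpow_add (by norm_num : (0:ℝ) < 2), ← Real.rpow_natCast ((2:ℝ)^(-b)) i,
        ← Real.rpow_mul (by norm_num : (0:ℝ) ≤ 2), mul_assoc]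
    rw [tsum_congr heq, ENNReal.tsum_mul_left, ENNReal.tsum_geometric]
    refine ENNReal.mul_lt_top ENNReal.ofReal_lt_top ?_
    rw [ENNReal.inv_lt_top, tsub_pos_iff_lt]
    exact ENNReal.ofReal_lt_one.2
      (Real.rpow_lt_one_of_one_lt_of_neg one_lt_two (neg_lt_zero.2 hb))
  · rw [herzNorm, herzNormWith, if_neg hq]
    set F : {u : ℤ // -1 ≤ u} → ℝ≥0∞ := fun u =>
      (ENNReal.ofReal ((2:ℝ) ^ ((u.1:ℝ) * a)) * lorentzNorm volume p r
        ((annulus (Set.univ : Set ℝ) u.1).indicator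
          ((⋃ i : ℕ, mset b (i+2)).indicator fun _ => (1:ℝ)))) ^ q.toReal with hF
    set K : ℝ := (2:ℝ)⁻¹ ^ r.toReal⁻¹ with hK
    have hKpos : 0 < K := Real.rpow_pos_of_pos (by norm_num) _
    set δ : ℝ≥0∞ := (ENNReal.ofReal K) ^ q.toReal with hδ
    have hδ0 : δ ≠ 0 :=
      (ENNReal.rpow_pos (ENNReal.ofReal_pos.2 hKpos) ENNReal.ofReal_ne_top).ne'
    have φ : ℕ → {u : ℤ // -1 ≤ u} := fun i => ⟨((i+2 : ℕ) : ℤ), by omega⟩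
    have hbound : ∀ i : ℕ, δ ≤ F ⟨((i+2 : ℕ) : ℤ), by omega⟩ := by
      intro i
      have hn : 2 ≤ i + 2 := by omega
      have hind : (annulus (Set.univ : Set ℝ) ((i+2:ℕ):ℤ)).indicator
          ((⋃ j : ℕ, mset b (j+2)).indicator fun _ => (1:ℝ))
          = (mset b (i+2)).indicator fun _ => (1:ℝ) := by
        rw [Set.indicator_indicator, annulus_inter hb hn]
      have hmpos : 0 < 2*(2:ℝ)^(-((i+2:ℕ):ℝ)*b) := by positivity
      have hL := lorentzNorm_indicator_ge p r hp0 hp hr0 hr hmpos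
        (le_of_eq (mset_volume b (i+2)).symm)
      have heq2 : (2*(2:ℝ)^(-((i+2:ℕ):ℝ)*b)/2) ^ p.toReal⁻¹
          = (2:ℝ)^(-((i+2:ℕ):ℝ)*a) := by
        rw [mul_div_cancel_left₀ _ (two_ne_zero : (2:ℝ) ≠ 0),
          ← Real.rpow_mul (by norm_num : (0:ℝ) ≤ 2)]
        congr 1
        rw [hbdef]
        field_simp
      rw [heq2] at hL
      have hw : ENNReal.ofReal ((2:ℝ)^(((i+2:ℕ):ℝ)*a))
            * ENNReal.ofReal ((2:ℝ)^(-((i+2:ℕ):ℝ)*a) * K)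
          = ENNReal.ofReal K := by
        rw [← ENNReal.ofReal_mul (by positivity), ← mul_assoc,
          ← Real.rpow_add (by norm_num : (0:ℝ) < 2),
          show ((i+2:ℕ):ℝ)*a + -((i+2:ℕ):ℝ)*a = 0 by ring, Real.rpow_zero, one_mul]
      have hF2 : F ⟨((i+2 : ℕ) : ℤ), by omega⟩
          = (ENNReal.ofReal ((2:ℝ)^(((i+2:ℕ):ℝ)*a)) * lorentzNorm volume p r
              ((mset b (i+2)).indicator fun _ => (1:ℝ))) ^ q.toReal := by
        rw [hF]
        simp only [Int.cast_natCast]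
        rw [hind]
      rw [hF2, hδ, ← hw]
      exact ENNReal.rpow_le_rpow (mul_le_mul_right hL _) hqt.le
    have htop : (∑' u : {u : ℤ // -1 ≤ u}, F u) = ∞ := by
      refine eq_top_iff.2 ?_
      calc (⊤ : ℝ≥0∞) = ∑' _ : ℕ, δ := (ENNReal.tsum_const_eq_top_of_ne_zero hδ0).symm
        _ ≤ ∑' i : ℕ, F ⟨((i+2 : ℕ) : ℤ), by omega⟩ := ENNReal.tsum_le_tsum hbound
        _ ≤ ∑' u, F u := by
            refine ENNReal.tsum_comp_le_tsum_of_injective ?_ F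
            intro i j h
            have := congrArg (fun u : {u : ℤ // -1 ≤ u} => u.1) h
            simp only at this
            omega
    rw [htop]
    exact ENNReal.top_rpow_of_pos (inv_pos.2 hqt)
end

section
/- Let a ∈ ℝ, 1 < p < ∞ and 1 ≤ q, r < ∞. Then the norm ‖·‖*_{HL^{a,r}_{p,q}} is absolutely continuous: for every f with ‖f‖*_{HL^{a,r}_{p,q}} < ∞ and every sequence (E_n) of measurable subsets of Ω such that χ_{E_n} → 0 pointwise μ-a.e., one has lim_{n→∞} ‖f·χ_{E_n}‖*_{HL^{a,r}_{p,q}} = 0. -/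
open MeasureTheory ENNReal Set Filter Topology

noncomputable section Aux

open MeasureTheory ENNReal Set Filter Topology

variable {X : Type*} [MeasurableSpace X] {μ : Measure X}

lemma rearr_anti (f : X → ℝ) : Antitone (rearr μ f) := fun s t hst =>
  sInf_le_sInf fun _ hα => le_trans hα (ENNReal.ofReal_le_ofReal hst)

lemma rearr_mono_fn {g h : X → ℝ} (H : ∀ x, |g x| ≤ |h x|) (s : ℝ) :
    rearr μ g s ≤ rearr μ h s :=
  sInf_le_sInf fun α hα =>
    le_trans (measure_mono fun x hx =>
      lt_of_lt_of_le hx (ENNReal.ofReal_le_ofReal (H x))) hα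

lemma rearrStar_mono_fn {g h : X → ℝ} (H : ∀ x, |g x| ≤ |h x|) (s : ℝ) :
    rearrStar μ g s ≤ rearrStar μ h s :=
  mul_le_mul_right (lintegral_mono fun t => rearr_mono_fn H t) _

lemma measurable_rearr (f : X → ℝ) : Measurable (rearr μ f) := (rearr_anti f).measurable

lemma measurable_rearrStar (f : X → ℝ) : Measurable (rearrStar μ f) := by
  have h1 : Monotone (fun s : ℝ => ∫⁻ t in Set.Ioc (0 : ℝ) s, rearr μ f t) := by
    intro s t hst
    exact lintegral_mono_set (Set.Ioc_subset_Ioc_right hst)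
  exact (ENNReal.measurable_ofReal.inv).mul h1.measurable

lemma lorentzStar_mono_fn {g h : X → ℝ} (H : ∀ x, |g x| ≤ |h x|) {p r : ℝ≥0∞}
    (hr : r ≠ ∞) : lorentzNormStar μ p r g ≤ lorentzNormStar μ p r h := by
  unfold lorentzNormStar lorentzNormOf
  rw [if_neg hr, if_neg hr]
  refine ENNReal.rpow_le_rpow ?_ (by positivity)
  refine lintegral_mono fun t => ?_
  refine ENNReal.div_le_div_right ?_ _
  exact ENNReal.rpow_le_rpow (mul_le_mul_right (rearrStar_mono_fn H t) _) ENNReal.toReal_nonneg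

lemma lint_inv_Ioi_one_top : ∫⁻ t in Set.Ioi (1 : ℝ), (ENNReal.ofReal t)⁻¹ = ∞ := by
  by_contra h
  have heq : ∫⁻ t in Set.Ioi (1 : ℝ), (‖t⁻¹‖₊ : ℝ≥0∞) = ∫⁻ t in Set.Ioi (1 : ℝ), (ENNReal.ofReal t)⁻¹ := by
    refine setLIntegral_congr_fun measurableSet_Ioi (fun t ht => ?_)
    have ht0 : (0 : ℝ) < t := lt_trans one_pos ht
    rw [← enorm_eq_nnnorm, ← ofReal_norm, Real.norm_eq_abs, abs_of_pos (inv_pos.2 ht0),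
      ENNReal.ofReal_inv_of_pos ht0]
  have hI : IntegrableOn (fun t : ℝ => t⁻¹) (Set.Ioi (1 : ℝ)) := by
    refine ⟨measurable_inv.aestronglyMeasurable, ?_⟩
    rw [HasFiniteIntegral]
    change ∫⁻ t in Set.Ioi (1 : ℝ), (‖t⁻¹‖₊ : ℝ≥0∞) < ∞
    rw [heq]
    exact lt_top_iff_ne_top.2 h
  exact not_IntegrableOn_Ioi_inv hI

lemma inner_integral_lt_top {f : X → ℝ} {p r : ℝ≥0∞} (hr : r ≠ ∞) (hrr : 0 < r.toReal)
    (hfin : lorentzNormStar μ p r f < ∞) :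
    ∫⁻ t in Set.Ioi (0 : ℝ),
      (ENNReal.ofReal (t ^ p.toReal⁻¹) * rearrStar μ f t) ^ r.toReal / ENNReal.ofReal t < ∞ := by
  unfold lorentzNormStar lorentzNormOf at hfin
  rw [if_neg hr] at hfin
  by_contra h
  rw [not_lt, top_le_iff] at h
  rw [h, ENNReal.top_rpow_of_pos (inv_pos.2 hrr)] at hfin
  exact (lt_irrefl _ hfin).elim

lemma rearr_ge_of_lt_distrib {f : X → ℝ} {α : ℝ≥0∞} {s : ℝ}
    (h : ENNReal.ofReal s < μ {x | α < ENNReal.ofReal |f x|}) :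
    α ≤ rearr μ f s := by
  refine le_sInf fun β hβ => ?_
  by_contra hc
  push_neg at hc
  have hsub : {x | α < ENNReal.ofReal |f x|} ⊆ {x | β < ENNReal.ofReal |f x|} :=
    fun x hx => lt_trans hc hx
  exact absurd (le_trans (measure_mono hsub) hβ) (not_le.2 h)

lemma distrib_lt_top {f : X → ℝ} {p r : ℝ≥0∞} (hr : r ≠ ∞) (hrr : 0 < r.toReal)
    (hfin : lorentzNormStar μ p r f < ∞) {α : ℝ≥0∞} (hα : 0 < α) :
    μ {x | α < ENNReal.ofReal |f x|} < ∞ := by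
  by_contra h
  rw [not_lt, top_le_iff] at h
  have hre : ∀ s : ℝ, α ≤ rearr μ f s := fun s =>
    rearr_ge_of_lt_distrib (by rw [h]; exact ENNReal.ofReal_lt_top)
  have hstar : ∀ s : ℝ, 0 < s → α ≤ rearrStar μ f s := by
    intro s hs
    have h1 : α * ENNReal.ofReal s ≤ ∫⁻ t in Set.Ioc (0 : ℝ) s, rearr μ f t := by
      calc α * ENNReal.ofReal s = α * volume (Set.Ioc (0 : ℝ) s) := by
            rw [Real.volume_Ioc, sub_zero]
        _ = ∫⁻ _ in Set.Ioc (0 : ℝ) s, α := (setLIntegral_const _ _).symm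
        _ ≤ _ := setLIntegral_mono' measurableSet_Ioc fun t _ => hre t
    have h2 : (ENNReal.ofReal s)⁻¹ * (α * ENNReal.ofReal s) ≤ rearrStar μ f s :=
      mul_le_mul_right h1 _
    have h3 : (ENNReal.ofReal s)⁻¹ * (α * ENNReal.ofReal s) = α := by
      rw [mul_comm α, ← mul_assoc, ENNReal.inv_mul_cancel (by simpa using hs) ENNReal.ofReal_ne_top,
        one_mul]
    rwa [h3] at h2
  have hkey : ∀ t ∈ Set.Ioi (1 : ℝ),
      α ^ r.toReal * (ENNReal.ofReal t)⁻¹ ≤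
        (ENNReal.ofReal (t ^ p.toReal⁻¹) * rearrStar μ f t) ^ r.toReal / ENNReal.ofReal t := by
    intro t ht
    rw [div_eq_mul_inv]
    refine mul_le_mul_left ?_ _
    refine ENNReal.rpow_le_rpow ?_ ENNReal.toReal_nonneg
    calc α = 1 * α := (one_mul α).symm
      _ ≤ ENNReal.ofReal (t ^ p.toReal⁻¹) * rearrStar μ f t := by
          refine mul_le_mul' ?_ (hstar t (lt_trans one_pos ht))
          rw [ENNReal.one_le_ofReal]
          exact Real.one_le_rpow (le_of_lt ht) (by positivity)
  have hge : ∫⁻ t in Set.Ioi (0 : ℝ),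
      (ENNReal.ofReal (t ^ p.toReal⁻¹) * rearrStar μ f t) ^ r.toReal / ENNReal.ofReal t = ∞ := by
    rw [eq_top_iff]
    calc (∞ : ℝ≥0∞) = α ^ r.toReal * ∫⁻ t in Set.Ioi (1 : ℝ), (ENNReal.ofReal t)⁻¹ := by
          rw [lint_inv_Ioi_one_top, ENNReal.mul_top ?_]
          intro h0
          rcases ENNReal.rpow_eq_zero_iff.1 h0 with ⟨h1, _⟩ | ⟨_, h2⟩
          · exact hα.ne' h1
          · exact absurd h2 (not_lt.2 hrr.le)
      _ = ∫⁻ t in Set.Ioi (1 : ℝ), α ^ r.toReal * (ENNReal.ofReal t)⁻¹ :=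
          (lintegral_const_mul _ (ENNReal.measurable_ofReal.inv)).symm
      _ ≤ ∫⁻ t in Set.Ioi (1 : ℝ),
            (ENNReal.ofReal (t ^ p.toReal⁻¹) * rearrStar μ f t) ^ r.toReal / ENNReal.ofReal t :=
          setLIntegral_mono' measurableSet_Ioi hkey
      _ ≤ _ := lintegral_mono_set (Set.Ioi_subset_Ioi zero_le_one)
  exact absurd (inner_integral_lt_top hr hrr hfin) (by rw [hge]; exact lt_irrefl _)

lemma rearr_integral_lt_top {f : X → ℝ} {p r : ℝ≥0∞} (hr : r ≠ ∞) (hrr : 0 < r.toReal)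
    (hfin : lorentzNormStar μ p r f < ∞) (s : ℝ) :
    ∫⁻ t in Set.Ioc (0 : ℝ) s, rearr μ f t < ∞ := by
  by_contra h
  rw [not_lt, top_le_iff] at h
  have hs : 0 < s := by
    by_contra hs
    push_neg at hs
    rw [Set.Ioc_eq_empty (by linarith), Measure.restrict_empty, lintegral_zero_measure] at h
    exact ENNReal.zero_ne_top h
  have hstar : ∀ t : ℝ, s ≤ t → rearrStar μ f t = ∞ := by
    intro t hst
    have h1 : ∫⁻ u in Set.Ioc (0 : ℝ) t, rearr μ f u = ∞ :=
      eq_top_iff.2 (h ▸ lintegral_mono_set (Set.Ioc_subset_Ioc_right hst))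
    rw [rearrStar, h1, ENNReal.mul_top]
    simp only [ne_eq, ENNReal.inv_eq_zero]
    exact ENNReal.ofReal_ne_top
  have hkey : ∀ t ∈ Set.Ioi s,
      (ENNReal.ofReal (t ^ p.toReal⁻¹) * rearrStar μ f t) ^ r.toReal / ENNReal.ofReal t = ∞ := by
    intro t ht
    have ht0 : 0 < t := lt_trans hs ht
    rw [hstar t (le_of_lt ht), ENNReal.mul_top (by simp [Real.rpow_pos_of_pos ht0]),
      ENNReal.top_rpow_of_pos hrr, ENNReal.top_div_of_ne_top ENNReal.ofReal_ne_top]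
  have hge : ∫⁻ t in Set.Ioi (0 : ℝ),
      (ENNReal.ofReal (t ^ p.toReal⁻¹) * rearrStar μ f t) ^ r.toReal / ENNReal.ofReal t = ∞ := by
    rw [eq_top_iff]
    calc (∞ : ℝ≥0∞) = ∞ * volume (Set.Ioi s) := by rw [Real.volume_Ioi]; simp
      _ = ∫⁻ _ in Set.Ioi s, ∞ := (setLIntegral_const _ _).symm
      _ ≤ ∫⁻ t in Set.Ioi s,
            (ENNReal.ofReal (t ^ p.toReal⁻¹) * rearrStar μ f t) ^ r.toReal / ENNReal.ofReal t :=
          setLIntegral_mono' measurableSet_Ioi fun t ht => (hkey t ht).symm ▸ le_rfl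
      _ ≤ _ := lintegral_mono_set (Set.Ioi_subset_Ioi (le_of_lt hs))
  exact absurd (inner_integral_lt_top hr hrr hfin) (by rw [hge]; exact lt_irrefl _)

lemma block_tendsto {F : X → ℝ} (hF : Measurable F)
    {p r : ℝ≥0∞} (hr : r ≠ ∞) (hrr : 0 < r.toReal)
    (hfin : lorentzNormStar μ p r F < ∞)
    {E : ℕ → Set X} (hE : ∀ n, MeasurableSet (E n))
    (hE0 : ∀ᵐ x ∂μ, ∀ᶠ n in atTop, x ∉ E n)
    {g : ℕ → X → ℝ} (hg_le : ∀ n x, |g n x| ≤ |F x|)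
    (hg_sub : ∀ (n : ℕ) (β : ℝ≥0∞),
      {x | β < ENNReal.ofReal |g n x|} ⊆ E n ∩ {x | β < ENNReal.ofReal |F x|}) :
    Tendsto (fun n => lorentzNormStar μ p r (g n)) atTop (𝓝 0) := by
  -- Step 4: measure convergence
  have hmeasconv : ∀ S : Set X, MeasurableSet S → μ S < ∞ →
      Tendsto (fun n => μ (E n ∩ S)) atTop (𝓝 0) := by
    intro S hS hSfin
    have h2 := tendsto_lintegral_of_dominated_convergence (μ := μ)
      (F := fun n x => (E n ∩ S).indicator 1 x) (f := fun _ => 0) (S.indicator 1)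
      (fun n => measurable_one.indicator ((hE n).inter hS))
      (fun n => ae_of_all _ (Set.indicator_le_indicator_of_subset Set.inter_subset_right
        (fun _ => zero_le)))
      (by rw [lintegral_indicator_one hS]; exact hSfin.ne)
      (by
        filter_upwards [hE0] with x hx
        refine Tendsto.congr' ?_ tendsto_const_nhds
        filter_upwards [hx] with n hn
        exact (Set.indicator_of_notMem (fun hmem => hn hmem.1) _).symm)
    simp only [lintegral_zero] at h2
    refine h2.congr fun n => ?_
    exact lintegral_indicator_one ((hE n).inter hS)
  -- Step 5: rearrangement convergence
  have hrearr : ∀ t : ℝ, 0 < t → Tendsto (fun n => rearr μ (g n) t) atTop (𝓝 0) := by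
    intro t ht
    rw [ENNReal.tendsto_nhds_zero]
    intro ε hε
    obtain ⟨δ, hδ0, hδε⟩ : ∃ δ : ℝ, 0 < δ ∧ ENNReal.ofReal δ ≤ ε := by
      rcases eq_or_ne ε ∞ with h | h
      · exact ⟨1, one_pos, by simp [h]⟩
      · exact ⟨ε.toReal, ENNReal.toReal_pos hε.ne' h, by rw [ENNReal.ofReal_toReal h]⟩
    set S : Set X := {x | ENNReal.ofReal δ < ENNReal.ofReal |F x|} with hSdef
    have hSmeas : MeasurableSet S :=
      measurableSet_lt measurable_const (ENNReal.measurable_ofReal.comp hF.abs)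
    have hSfin : μ S < ∞ := distrib_lt_top hr hrr hfin (ENNReal.ofReal_pos.2 hδ0)
    have hconv := (hmeasconv S hSmeas hSfin).eventually_lt_const
      (show (0 : ℝ≥0∞) < ENNReal.ofReal t from ENNReal.ofReal_pos.2 ht)
    filter_upwards [hconv] with n hn
    have hmem : ENNReal.ofReal δ ∈
        {α : ℝ≥0∞ | μ {x | α < ENNReal.ofReal |(g n) x|} ≤ ENNReal.ofReal t} :=
      le_trans (measure_mono (hg_sub n _)) hn.le
    exact le_trans (sInf_le hmem) hδε
  -- Step 6: rearrStar convergence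
  have hstar : ∀ s : ℝ, 0 < s → Tendsto (fun n => rearrStar μ (g n) s) atTop (𝓝 0) := by
    intro s hs
    have hdct := tendsto_lintegral_of_dominated_convergence
      (μ := volume.restrict (Set.Ioc (0 : ℝ) s))
      (F := fun n t => rearr μ (g n) t) (f := fun _ => 0) (rearr μ F)
      (fun n => measurable_rearr (g n))
      (fun n => ae_of_all _ fun t => rearr_mono_fn (hg_le n) t)
      (rearr_integral_lt_top hr hrr hfin s).ne
      (by
        filter_upwards [ae_restrict_mem measurableSet_Ioc] with t ht
        exact hrearr t ht.1)
    simp only [lintegral_zero] at hdct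
    have := ENNReal.Tendsto.const_mul hdct
      (Or.inr (show (ENNReal.ofReal s)⁻¹ ≠ ∞ by simp [ENNReal.ofReal_pos.2 hs, (ENNReal.ofReal_pos.2 hs).ne']))
    simpa [rearrStar] using this
  -- Step 7: Lorentz norm convergence
  have hdct2 := tendsto_lintegral_of_dominated_convergence
    (μ := volume.restrict (Set.Ioi (0 : ℝ)))
    (F := fun n t => (ENNReal.ofReal (t ^ p.toReal⁻¹) * rearrStar μ (g n) t) ^ r.toReal
      / ENNReal.ofReal t)
    (f := fun _ => 0)
    (fun t => (ENNReal.ofReal (t ^ p.toReal⁻¹) * rearrStar μ F t) ^ r.toReal / ENNReal.ofReal t)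
    (fun n => by
      refine Measurable.div ?_ ENNReal.measurable_ofReal
      refine Measurable.comp ENNReal.continuous_rpow_const.measurable ?_
      exact ((show Measurable fun t : ℝ => t ^ p.toReal⁻¹ by fun_prop).ennreal_ofReal).mul (measurable_rearrStar (g n)))
    (fun n => ae_of_all _ fun t => by
      refine ENNReal.div_le_div_right ?_ _
      exact ENNReal.rpow_le_rpow (mul_le_mul_right (rearrStar_mono_fn (hg_le n) t) _)
        ENNReal.toReal_nonneg)
    (inner_integral_lt_top hr hrr hfin).ne
    (by
      filter_upwards [ae_restrict_mem measurableSet_Ioi] with t ht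
      have h1 := ENNReal.Tendsto.const_mul (a := ENNReal.ofReal (t ^ p.toReal⁻¹)) (hstar t (Set.mem_Ioi.1 ht)) (Or.inr ENNReal.ofReal_ne_top)
      rw [mul_zero] at h1
      have h2 : Tendsto (fun n => (ENNReal.ofReal (t ^ p.toReal⁻¹) * rearrStar μ (g n) t)
          ^ r.toReal) atTop (𝓝 0) := by
        have := (ENNReal.continuous_rpow_const (y := r.toReal)).tendsto 0
        simpa [ENNReal.zero_rpow_of_pos hrr, Function.comp_def] using this.comp h1
      have h3 := ENNReal.Tendsto.const_mul h2 (Or.inr (show (ENNReal.ofReal t)⁻¹ ≠ ∞ by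
        simp [(ENNReal.ofReal_pos.2 (Set.mem_Ioi.1 ht)).ne']))
      rw [mul_zero] at h3
      refine h3.congr fun n => ?_
      rw [div_eq_mul_inv, mul_comm])
  simp only [lintegral_zero] at hdct2
  have hfinal : Tendsto (fun n => lorentzNormStar μ p r (g n)) atTop (𝓝 (0 ^ r.toReal⁻¹)) := by
    have hc := (ENNReal.continuous_rpow_const (y := r.toReal⁻¹)).tendsto 0
    refine (hc.comp hdct2).congr fun n => ?_
    simp only [Function.comp]
    unfold lorentzNormStar lorentzNormOf
    rw [if_neg hr]
  simpa [ENNReal.zero_rpow_of_pos (inv_pos.2 hrr)] using hfinal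

end Aux

/-- For `a ∈ ℝ`, `1 < p < ∞` and `1 ≤ q, r < ∞`, the norm
`‖·‖*_{HL^{a,r}_{p,q}}` is absolutely continuous: if `‖f‖* < ∞` and `(E_n)` is a
sequence of measurable subsets of `Ω` whose indicator functions tend to `0`
pointwise a.e., then `‖f χ_{E_n}‖*_{HL^{a,r}_{p,q}} → 0`. -/
theorem lorentzHerz_abs_continuous {N : ℕ} (hN : 1 ≤ N)
    (Ω : Set (Euc N)) (hΩ : MeasurableSet Ω)
    (a : ℝ) (p q r : ℝ≥0∞) (hp1 : 1 < p) (hp : p ≠ ∞)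
    (hq1 : 1 ≤ q) (hq : q ≠ ∞) (hr1 : 1 ≤ r) (hr : r ≠ ∞)
    (f : Euc N → ℝ) (hf : Measurable f)
    (hfin : herzNormStar volume Ω a p q r f < ∞)
    (E : ℕ → Set (Euc N)) (hE : ∀ n, MeasurableSet (E n)) (hEΩ : ∀ n, E n ⊆ Ω)
    (hE0 : ∀ᵐ x ∂volume, Filter.Tendsto
      (fun n => (E n).indicator (fun _ => (1 : ℝ)) x) Filter.atTop (nhds 0)) :
    Filter.Tendsto (fun n => herzNormStar volume Ω a p q r ((E n).indicator f))
      Filter.atTop (nhds 0) := by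
  classical
  have hqq : 0 < q.toReal := ENNReal.toReal_pos (one_pos.trans_le hq1).ne' hq
  have hrr : 0 < r.toReal := ENNReal.toReal_pos (one_pos.trans_le hr1).ne' hr
  have hann : ∀ u : ℤ, MeasurableSet (annulus Ω u) := by
    intro u
    unfold annulus
    split
    · exact hΩ.inter (measurableSet_lt measurable_norm measurable_const)
    · exact hΩ.inter ((measurableSet_le measurable_const measurable_norm).inter
        (measurableSet_lt measurable_norm measurable_const))
  have hE0' : ∀ᵐ x ∂(volume : Measure (Euc N)), ∀ᶠ n in atTop, x ∉ E n := by
    filter_upwards [hE0] with x hx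
    have h1 := hx.eventually_lt_const (zero_lt_one)
    filter_upwards [h1] with n hn hmem
    rw [Set.indicator_of_mem hmem] at hn
    exact lt_irrefl _ hn
  unfold herzNormStar herzNormWith at hfin ⊢
  rw [if_neg hq] at hfin
  simp only [if_neg hq]
  have hsum_ne : ∑' u : {u : ℤ // -1 ≤ u},
      (ENNReal.ofReal ((2 : ℝ) ^ ((u.1 : ℝ) * a)) *
        lorentzNormStar volume p r ((annulus Ω u.1).indicator f)) ^ q.toReal ≠ ∞ := by
    intro h
    rw [h, ENNReal.top_rpow_of_pos (inv_pos.2 hqq)] at hfin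
    exact lt_irrefl _ hfin
  have hterm : ∀ u : {u : ℤ // -1 ≤ u},
      lorentzNormStar volume p r ((annulus Ω u.1).indicator f) < ∞ := by
    intro u
    have h1 := ENNReal.lt_top_of_tsum_ne_top hsum_ne u
    have h2 : ENNReal.ofReal ((2 : ℝ) ^ ((u.1 : ℝ) * a)) *
        lorentzNormStar volume p r ((annulus Ω u.1).indicator f) ≠ ∞ := by
      intro hh
      rw [hh, ENNReal.top_rpow_of_pos hqq] at h1
      exact lt_irrefl _ h1
    rw [lt_top_iff_ne_top]
    intro hL
    rw [hL, ENNReal.mul_top (ENNReal.ofReal_pos.2 (Real.rpow_pos_of_pos two_pos _)).ne'] at h2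
    exact h2 rfl
  have hg_le : ∀ (u : {u : ℤ // -1 ≤ u}) (n : ℕ) (x : Euc N),
      |(annulus Ω u.1).indicator ((E n).indicator f) x| ≤ |(annulus Ω u.1).indicator f x| := by
    intro u n x
    by_cases hx : x ∈ annulus Ω u.1
    · simp only [Set.indicator_of_mem hx]
      by_cases hx2 : x ∈ E n
      · simp [Set.indicator_of_mem hx2]
      · simp [Set.indicator_of_notMem hx2]
    · simp [Set.indicator_of_notMem hx]
  have hg_sub : ∀ (u : {u : ℤ // -1 ≤ u}) (n : ℕ) (β : ℝ≥0∞),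
      {x | β < ENNReal.ofReal |(annulus Ω u.1).indicator ((E n).indicator f) x|} ⊆
        E n ∩ {x | β < ENNReal.ofReal |(annulus Ω u.1).indicator f x|} := by
    intro u n β x hx
    simp only [Set.mem_setOf_eq] at hx
    by_cases hx1 : x ∈ annulus Ω u.1
    · rw [Set.indicator_of_mem hx1] at hx
      by_cases hx2 : x ∈ E n
      · rw [Set.indicator_of_mem hx2] at hx
        exact ⟨hx2, by rw [Set.mem_setOf_eq, Set.indicator_of_mem hx1]; exact hx⟩
      · rw [Set.indicator_of_notMem hx2] at hx
        exact absurd hx (by simp)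
    · rw [Set.indicator_of_notMem hx1] at hx
      exact absurd hx (by simp)
  have hblk : ∀ u : {u : ℤ // -1 ≤ u},
      Tendsto (fun n => lorentzNormStar volume p r
        ((annulus Ω u.1).indicator ((E n).indicator f))) atTop (𝓝 0) := by
    intro u
    exact block_tendsto (hf.indicator (hann u.1)) hr hrr (hterm u) hE hE0'
      (hg_le u) (hg_sub u)
  have hsum0 : Tendsto (fun n => ∑' u : {u : ℤ // -1 ≤ u},
      (ENNReal.ofReal ((2 : ℝ) ^ ((u.1 : ℝ) * a)) *
        lorentzNormStar volume p r ((annulus Ω u.1).indicator ((E n).indicator f))) ^ q.toReal)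
      atTop (𝓝 0) := by
    have hDCT := tendsto_lintegral_of_dominated_convergence
      (μ := (Measure.count : Measure {u : ℤ // -1 ≤ u}))
      (F := fun n u => (ENNReal.ofReal ((2 : ℝ) ^ ((u.1 : ℝ) * a)) *
        lorentzNormStar volume p r ((annulus Ω u.1).indicator ((E n).indicator f))) ^ q.toReal)
      (f := fun _ => 0)
      (fun u => (ENNReal.ofReal ((2 : ℝ) ^ ((u.1 : ℝ) * a)) *
        lorentzNormStar volume p r ((annulus Ω u.1).indicator f)) ^ q.toReal)
      (fun n => measurable_of_countable _)
      (fun n => ae_of_all _ fun u => by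
        refine ENNReal.rpow_le_rpow ?_ ENNReal.toReal_nonneg
        exact mul_le_mul_right (lorentzStar_mono_fn (hg_le u n) hr) _)
      (by rw [lintegral_count]; exact hsum_ne)
      (ae_of_all _ fun u => by
        have h1 := ENNReal.Tendsto.const_mul
          (a := ENNReal.ofReal ((2 : ℝ) ^ ((u.1 : ℝ) * a))) (hblk u)
          (Or.inr ENNReal.ofReal_ne_top)
        rw [mul_zero] at h1
        have h2 := (ENNReal.continuous_rpow_const (y := q.toReal)).tendsto 0
        simpa [ENNReal.zero_rpow_of_pos hqq, Function.comp_def] using h2.comp h1)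
    simp only [lintegral_count, lintegral_zero] at hDCT
    exact hDCT
  have hfinal := ((ENNReal.continuous_rpow_const (y := q.toReal⁻¹)).tendsto 0).comp hsum0
  simpa [ENNReal.zero_rpow_of_pos (inv_pos.2 hqq), Function.comp_def] using hfinal
end
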